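/- arXiv:2510.26757 — 3 statements merged into one kernel-verified Lean document; each statement's English description precedes it below -/
import Mathlib

section
/- Let μ and λ be two compositions of d with n parts. Then the coefficient [z^λ]((Sym^d J)(z_1^{μ_1}⋯z_n^{μ_n})) equals C_{μ,λ}·m_{μ,λ} if μ ≤ λ, and equals 0 otherwise. -/
open MvPolynomial Finset

set_option maxHeartbeats 1000000
set_option synthInstance.maxHeartbeats 400000

noncomputable section

/-- `Kk p` is the fraction field of `ℂ[x_1,…,x_p, y]`, a polynomial ring in `p+1` variables
(so the paper's `n` is `p+1`). -/
abbrev Kk (p : ℕ) := FractionRing (MvPolynomial (Fin (p+1)) ℂ)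

variable {p : ℕ}

/-- the images `x_i` (for `i = 1, …, p`) in the fraction field -/
def xv (i : Fin p) : Kk p :=
  algebraMap (MvPolynomial (Fin (p+1)) ℂ) (Kk p) (X i.castSucc)

/-- the image of `y` in the fraction field -/
def yv : Kk p :=
  algebraMap (MvPolynomial (Fin (p+1)) ℂ) (Kk p) (X (Fin.last p))

/-- `(Sym^d J)`: the substitution `z_i ↦ y^{-a_i} z_i` for `i = 1, …, n-1` and
`z_n ↦ -∑_{i<n} a_i x_i y^{-a_i-1} z_i - y^{-2} z_n`. -/
def symJ (a : Fin p → ℤ) :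
    MvPolynomial (Fin (p+1)) (Kk p) →ₐ[Kk p] MvPolynomial (Fin (p+1)) (Kk p) :=
  aeval (Fin.lastCases
    (-(∑ i : Fin p, C ((a i : Kk p) * xv i * yv ^ (-(a i) - 1 : ℤ)) * X i.castSucc)
      - C (yv ^ (-2 : ℤ)) * X (Fin.last p))
    (fun i => C (yv ^ (-(a i) : ℤ)) * X i.castSucc))

/-- coefficient extraction `[z^λ]` -/
def coeffOf (lam : Fin (p+1) → ℕ) (h : MvPolynomial (Fin (p+1)) (Kk p)) : Kk p :=
  coeff (Finsupp.equivFunOnFinite.symm lam) h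

/-- `a · λ° = ∑_{i=1}^{n-1} a_i λ_i` -/
def aDot (a : Fin p → ℤ) (lam : Fin (p+1) → ℕ) : ℤ :=
  ∑ i : Fin p, a i * lam i.castSucc

/-- the monomial `m_{μ,λ} = (∏_{i<n} x_i^{λ_i - μ_i}) y^{-a·λ° - λ_n - μ_n}` -/
def mMono (a : Fin p → ℤ) (μ lam : Fin (p+1) → ℕ) : Kk p :=
  (∏ i : Fin p, xv i ^ (lam i.castSucc - μ i.castSucc)) *
    yv ^ (-(aDot a lam) - (lam (Fin.last p) : ℤ) - (μ (Fin.last p) : ℤ))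

/-- the integer coefficient
`C_{μ,λ} = (-1)^{μ_n} μ_n! / ((λ_1-μ_1)! ⋯ (λ_{n-1}-μ_{n-1})! λ_n!) ∏_{i<n} a_i^{λ_i-μ_i}` -/
def Cco (a : Fin p → ℤ) (μ lam : Fin (p+1) → ℕ) : ℤ :=
  (-1) ^ (μ (Fin.last p)) *
    (((μ (Fin.last p)).factorial /
      ((∏ i : Fin p, (lam i.castSucc - μ i.castSucc).factorial) *
        (lam (Fin.last p)).factorial) : ℕ) : ℤ) *
    ∏ i : Fin p, (a i) ^ (lam i.castSucc - μ i.castSucc)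

/-- helper: `y ≠ 0` -/
lemma yv_ne_zero : (yv : Kk p) ≠ 0 := by
  intro h
  apply MvPolynomial.X_ne_zero (R := ℂ) (σ := Fin (p+1)) (Fin.last p)
  apply IsFractionRing.injective (MvPolynomial (Fin (p+1)) ℂ) (Kk p)
  rw [map_zero]; exact h

lemma zpow_pow' (y : Kk p) (m : ℤ) (n : ℕ) : (y ^ m) ^ n = y ^ (m * n) := by
  rw [← zpow_natCast (y ^ m), ← zpow_mul]

lemma prod_zpow' {ι : Type*} (s : Finset ι) (y : Kk p) (hy : y ≠ 0) (f : ι → ℤ) :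
    ∏ i ∈ s, y ^ f i = y ^ (∑ i ∈ s, f i) := by
  induction s using Finset.cons_induction with
  | empty => simp
  | cons a s ha ih => rw [Finset.sum_cons, Finset.prod_cons, zpow_add₀ hy, ih]

/-- The full expansion of `symJ a (z^μ)` as a sum of monomials. -/
lemma symJ_expand (a : Fin p → ℤ) (μ : Fin (p+1) → ℕ) :
    symJ a (monomial (Finsupp.equivFunOnFinite.symm μ) (1 : Kk p)) =
    ∑ k ∈ piAntidiag (univ : Finset (Fin (p+1))) (μ (Fin.last p)),
      monomial (Finsupp.equivFunOnFinite.symm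
          (fun j => (Fin.lastCases 0 (fun i => μ i.castSucc) j) + k j))
        ((-1 : Kk p) ^ (μ (Fin.last p)) * (Nat.multinomial univ k : Kk p) *
          ((∏ i : Fin p, (yv ^ (-(a i) : ℤ)) ^ μ i.castSucc) *
           ∏ j : Fin (p+1),
             (Fin.lastCases (yv ^ (-2:ℤ))
               (fun i => (a i : Kk p) * xv i * yv ^ (-(a i) - 1 : ℤ)) j) ^ k j)) := by
  classical
  set w : Fin (p+1) → Kk p :=
    Fin.lastCases (yv ^ (-2:ℤ)) (fun i => (a i : Kk p) * xv i * yv ^ (-(a i) - 1 : ℤ)) with hw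
  set μ0 : Fin (p+1) → ℕ := fun j => Fin.lastCases 0 (fun i => μ i.castSucc) j with hμ0
  rw [symJ, aeval_monomial, map_one, one_mul, Finsupp.prod_fintype _ _ (fun i => pow_zero _)]
  simp only [Finsupp.coe_equivFunOnFinite_symm]
  rw [Fin.prod_univ_castSucc]
  simp only [Fin.lastCases_castSucc, Fin.lastCases_last]
  have hlast :
      (-(∑ i : Fin p, C ((a i : Kk p) * xv i * yv ^ (-(a i) - 1 : ℤ)) * X i.castSucc)
        - C (yv ^ (-2 : ℤ)) * X (Fin.last p))
      = - ∑ j : Fin (p+1), C (w j) * (X j : MvPolynomial (Fin (p+1)) (Kk p)) := by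
    rw [Fin.sum_univ_castSucc]
    simp only [hw, Fin.lastCases_castSucc, Fin.lastCases_last]
    ring
  rw [hlast]
  have hpow : (-∑ j : Fin (p+1), C (w j) * (X j : MvPolynomial (Fin (p+1)) (Kk p))) ^ μ (Fin.last p)
      = (-1 : MvPolynomial (Fin (p+1)) (Kk p)) ^ μ (Fin.last p) *
        (∑ j : Fin (p+1), C (w j) * (X j : MvPolynomial (Fin (p+1)) (Kk p))) ^ μ (Fin.last p) := by
    ring
  rw [hpow, Finset.sum_pow_eq_sum_piAntidiag, Finset.mul_sum, Finset.mul_sum]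
  refine Finset.sum_congr rfl fun k hk => ?_
  rw [monomial_eq, Finsupp.prod_fintype _ _ (fun i => pow_zero _)]
  simp only [Finsupp.coe_equivFunOnFinite_symm]
  have hX : (∏ i : Fin p, (X i.castSucc : MvPolynomial (Fin (p+1)) (Kk p)) ^ μ i.castSucc) *
      ∏ j, (X j : MvPolynomial (Fin (p+1)) (Kk p)) ^ k j
      = ∏ j, (X j : MvPolynomial (Fin (p+1)) (Kk p)) ^ (μ0 j + k j) := by
    have h1 : (∏ i : Fin p, (X i.castSucc : MvPolynomial (Fin (p+1)) (Kk p)) ^ μ i.castSucc)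
        = ∏ j, (X j : MvPolynomial (Fin (p+1)) (Kk p)) ^ μ0 j := by
      rw [Fin.prod_univ_castSucc]
      simp [hμ0]
    rw [h1, ← Finset.prod_mul_distrib]
    exact Finset.prod_congr rfl fun j _ => (pow_add _ _ _).symm
  calc (∏ i : Fin p, (C (yv ^ (-(a i):ℤ)) * X i.castSucc) ^ μ i.castSucc) *
        ((-1 : MvPolynomial (Fin (p+1)) (Kk p)) ^ μ (Fin.last p) *
          ((Nat.multinomial univ k : MvPolynomial (Fin (p+1)) (Kk p)) *
            ∏ j, (C (w j) * X j) ^ k j))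
      = (C (∏ i : Fin p, (yv ^ (-(a i):ℤ)) ^ μ i.castSucc) *
          ∏ i : Fin p, (X i.castSucc : MvPolynomial (Fin (p+1)) (Kk p)) ^ μ i.castSucc) *
        (C ((-1:Kk p) ^ μ (Fin.last p)) *
          (C ((Nat.multinomial univ k : Kk p)) *
            (C (∏ j, w j ^ k j) * ∏ j, (X j : MvPolynomial (Fin (p+1)) (Kk p)) ^ k j))) := by
        simp only [mul_pow, Finset.prod_mul_distrib, map_pow, map_prod, map_neg, map_one,
          map_natCast]
    _ = C ((-1:Kk p) ^ μ (Fin.last p) * (Nat.multinomial univ k : Kk p) *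
          ((∏ i : Fin p, (yv ^ (-(a i):ℤ)) ^ μ i.castSucc) * ∏ j, w j ^ k j)) *
        ((∏ i : Fin p, (X i.castSucc : MvPolynomial (Fin (p+1)) (Kk p)) ^ μ i.castSucc) *
          ∏ j, (X j : MvPolynomial (Fin (p+1)) (Kk p)) ^ k j) := by
        simp only [map_mul]; ring
    _ = _ := by rw [hX]

/-- `[z^λ]((Sym^d J)(z^μ)) = C_{μ,λ} m_{μ,λ}` if `μ ≤ λ`, and `0` otherwise. -/
theorem coeff_symJ_monomial (p d : ℕ) (hp : 1 ≤ p) (hd : 1 ≤ d) (a : Fin p → ℤ)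
    (μ lam : Fin (p+1) → ℕ) (hμ : ∑ i, μ i = d) (hlam : ∑ i, lam i = d) :
    coeffOf lam (symJ a (monomial (Finsupp.equivFunOnFinite.symm μ) (1 : Kk p))) =
      if ∀ i : Fin p, μ i.castSucc ≤ lam i.castSucc then
        (Cco a μ lam : Kk p) * mMono a μ lam
      else 0 := by
  classical
  rw [coeffOf, symJ_expand, MvPolynomial.coeff_sum]
  simp only [coeff_monomial]
  -- basic sum facts
  have hμc : (∑ i : Fin p, μ i.castSucc) + μ (Fin.last p) = d := by
    rw [← Fin.sum_univ_castSucc]; exact hμ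
  have hlamc : (∑ i : Fin p, lam i.castSucc) + lam (Fin.last p) = d := by
    rw [← Fin.sum_univ_castSucc]; exact hlam
  by_cases h : ∀ i : Fin p, μ i.castSucc ≤ lam i.castSucc
  · rw [if_pos h]
    set n : Fin p → ℕ := fun i => lam i.castSucc - μ i.castSucc with hn
    set k0 : Fin (p+1) → ℕ :=
      Fin.lastCases (lam (Fin.last p)) (fun i => n i) with hk0
    have hk0c : ∀ i : Fin p, k0 i.castSucc = n i := fun i => by simp [hk0]
    have hk0l : k0 (Fin.last p) = lam (Fin.last p) := by simp [hk0]
    have hk0sum : ∑ j, k0 j = μ (Fin.last p) := by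
      rw [Fin.sum_univ_castSucc, hk0l]
      have : ∑ i : Fin p, k0 i.castSucc = (∑ i : Fin p, lam i.castSucc)
          - ∑ i : Fin p, μ i.castSucc := by
        rw [← Finset.sum_tsub_distrib _ (fun i _ => h i)]
        exact Finset.sum_congr rfl fun i _ => hk0c i
      have hsle : ∑ i : Fin p, μ i.castSucc ≤ ∑ i : Fin p, lam i.castSucc :=
        Finset.sum_le_sum fun i _ => h i
      omega
    have hk0mem : k0 ∈ piAntidiag (univ : Finset (Fin (p+1))) (μ (Fin.last p)) := by
      rw [Finset.mem_piAntidiag]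
      exact ⟨hk0sum, fun i _ => Finset.mem_univ i⟩
    have hcond : ∀ k : Fin (p+1) → ℕ,
        (Finsupp.equivFunOnFinite.symm
            (fun j => (Fin.lastCases 0 (fun i => μ i.castSucc) j : ℕ) + k j)
          = Finsupp.equivFunOnFinite.symm lam) ↔ k = k0 := by
      intro k
      rw [Finsupp.equivFunOnFinite.symm.injective.eq_iff, _root_.funext_iff,
        _root_.funext_iff]
      constructor
      · intro hk j
        induction j using Fin.lastCases with
        | last =>
          have h1 := hk (Fin.last p)
          simp only [Fin.lastCases_last] at h1
          rw [hk0l]; omega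
        | cast i =>
          have h1 := hk i.castSucc
          simp only [Fin.lastCases_castSucc] at h1
          rw [hk0c i]; simp only [hn]; omega
      · intro hk j
        induction j using Fin.lastCases with
        | last =>
          have h1 := hk (Fin.last p)
          rw [hk0l] at h1
          simp only [Fin.lastCases_last, h1, zero_add]
        | cast i =>
          have h1 := hk i.castSucc
          rw [hk0c i] at h1
          simp only [Fin.lastCases_castSucc, h1, hn]
          have := h i; omega
    -- collapse the sum
    rw [Finset.sum_congr rfl (fun k _ => by rw [if_congr (hcond k) rfl rfl]),
      Finset.sum_ite_eq' _ k0, if_pos hk0mem]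
    -- now compute the scalar
    have hmult : Nat.multinomial (univ : Finset (Fin (p+1))) k0 =
        (μ (Fin.last p)).factorial /
          ((∏ i : Fin p, (lam i.castSucc - μ i.castSucc).factorial) *
            (lam (Fin.last p)).factorial) := by
      have hpr : ∏ i : Fin p, (k0 i.castSucc).factorial
          = ∏ i : Fin p, (lam i.castSucc - μ i.castSucc).factorial := by
        exact Finset.prod_congr rfl fun i _ => by rw [hk0c i]
      rw [Nat.multinomial, hk0sum, Fin.prod_univ_castSucc, hk0l, hpr]
    have hw2 : (∏ j : Fin (p+1),
          (Fin.lastCases (yv ^ (-2:ℤ))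
            (fun i => (a i : Kk p) * xv i * yv ^ (-(a i) - 1 : ℤ)) j : Kk p) ^ k0 j)
        = (∏ i : Fin p, ((a i : Kk p)) ^ n i) * (∏ i : Fin p, xv i ^ n i) *
          ((∏ i : Fin p, (yv ^ (-(a i) - 1 : ℤ)) ^ n i) *
            (yv ^ (-2:ℤ)) ^ lam (Fin.last p)) := by
      rw [Fin.prod_univ_castSucc]
      simp only [Fin.lastCases_castSucc, Fin.lastCases_last, hk0l]
      simp only [hk0c]
      simp only [mul_pow, Finset.prod_mul_distrib]
      ring
    have hcast : ∀ i : Fin p, ((n i : ℕ) : ℤ) = (lam i.castSucc : ℤ) - μ i.castSucc :=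
      fun i => by rw [hn]; exact_mod_cast Nat.cast_sub (h i)
    have hy : (∏ i : Fin p, ((yv : Kk p) ^ (-(a i) : ℤ)) ^ μ i.castSucc) *
          ((∏ i : Fin p, (yv ^ (-(a i) - 1 : ℤ)) ^ n i) *
            (yv ^ (-2:ℤ)) ^ lam (Fin.last p))
        = yv ^ (-(aDot a lam) - (lam (Fin.last p) : ℤ) - (μ (Fin.last p) : ℤ)) := by
      simp only [zpow_pow']
      rw [prod_zpow' _ _ yv_ne_zero, prod_zpow' _ _ yv_ne_zero,
        ← zpow_add₀ yv_ne_zero, ← zpow_add₀ yv_ne_zero]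
      congr 1
      have e1 : ∑ i : Fin p, (-(a i) - 1) * (n i : ℤ)
          = ∑ i : Fin p, (-(a i * (lam i.castSucc : ℤ)) + a i * (μ i.castSucc : ℤ)
              - ((lam i.castSucc : ℤ) - (μ i.castSucc : ℤ))) :=
        Finset.sum_congr rfl fun i _ => by rw [hcast i]; ring
      have e2 : ∑ i : Fin p, (-(a i)) * (μ i.castSucc : ℤ)
          = - ∑ i : Fin p, a i * (μ i.castSucc : ℤ) := by
        rw [← Finset.sum_neg_distrib]
        exact Finset.sum_congr rfl fun i _ => by ring
      rw [e1, e2]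
      simp only [Finset.sum_sub_distrib, Finset.sum_add_distrib, Finset.sum_neg_distrib]
      have h1 : ((∑ i : Fin p, (μ i.castSucc : ℤ)) + (μ (Fin.last p) : ℤ)) = (d : ℤ) := by
        exact_mod_cast congrArg (Nat.cast : ℕ → ℤ) hμc
      have h2 : ((∑ i : Fin p, (lam i.castSucc : ℤ)) + (lam (Fin.last p) : ℤ)) = (d : ℤ) := by
        exact_mod_cast congrArg (Nat.cast : ℕ → ℤ) hlamc
      rw [aDot]
      push_cast at h1 h2 ⊢
      linarith
    rw [hw2]
    calc ((-1 : Kk p)) ^ μ (Fin.last p) * (Nat.multinomial univ k0 : Kk p) *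
          ((∏ i : Fin p, ((yv : Kk p) ^ (-(a i) : ℤ)) ^ μ i.castSucc) *
            ((∏ i : Fin p, ((a i : Kk p)) ^ n i) * (∏ i : Fin p, xv i ^ n i) *
              ((∏ i : Fin p, (yv ^ (-(a i) - 1 : ℤ)) ^ n i) *
                (yv ^ (-2:ℤ)) ^ lam (Fin.last p))))
        = ((-1 : Kk p)) ^ μ (Fin.last p) * (Nat.multinomial univ k0 : Kk p) *
            (∏ i : Fin p, ((a i : Kk p)) ^ n i) * (∏ i : Fin p, xv i ^ n i) *
          ((∏ i : Fin p, (yv ^ (-(a i) : ℤ)) ^ μ i.castSucc) *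
            ((∏ i : Fin p, (yv ^ (-(a i) - 1 : ℤ)) ^ n i) *
              (yv ^ (-2:ℤ)) ^ lam (Fin.last p))) := by ring
      _ = (Cco a μ lam : Kk p) * mMono a μ lam := by
          rw [hy, hmult, Cco, mMono]
          simp only [Int.cast_mul, Int.cast_pow, Int.cast_neg, Int.cast_one,
            Int.cast_natCast, Int.cast_prod]
          ring
  · rw [if_neg h]
    refine Finset.sum_eq_zero fun k hk => ?_
    rw [if_neg]
    intro hc
    apply h
    intro i
    have := congrFun (Finsupp.equivFunOnFinite.symm.injective hc) i.castSucc
    simp only [Fin.lastCases_castSucc] at this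
    omega

end
end

section
/- For any homogeneous polynomial f ∈ K[z_1,…,z_n] of degree d, one has (Sym^d J)(f) = Σ_{λ ⊨ d} z_1^{λ_1}⋯z_n^{λ_n} · Σ_{μ ≤ λ} C_{μ,λ} · m_{μ,λ} · [z^μ](f), where the outer sum is over all compositions λ of d with n parts and the inner sum is over all compositions μ of d with μ ≤ λ. -/
open MvPolynomial Finset

noncomputable section

variable {p : ℕ}

section Aux

variable {K : Type*} [Field K]

lemma zpow_sum' {ι : Type*} (y : K) (hy : y ≠ 0) (s : Finset ι) (e : ι → ℤ) :
    y ^ (∑ i ∈ s, e i) = ∏ i ∈ s, y ^ e i := by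
  classical
  induction s using Finset.cons_induction with
  | empty => simp
  | cons a s ha ih => rw [Finset.sum_cons, Finset.prod_cons, zpow_add₀ hy, ih]

lemma symm_add' (f g : Fin (p+1) → ℕ) :
    Finsupp.equivFunOnFinite.symm (f + g) =
      Finsupp.equivFunOnFinite.symm f + Finsupp.equivFunOnFinite.symm g := by
  ext i; simp

lemma prod_X_pow' (m : Fin (p+1) → ℕ) :
    (∏ i : Fin (p+1), (X i : MvPolynomial (Fin (p+1)) K) ^ m i) =
      monomial (Finsupp.equivFunOnFinite.symm m) 1 := by
  rw [monomial_eq, C_1, one_mul, Finsupp.prod_pow]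
  simp

def ext0 (m : Fin (p+1) → ℕ) : Fin (p+1) → ℕ := Fin.snoc (fun i => m i.castSucc) 0

@[simp] lemma ext0_castSucc (m : Fin (p+1) → ℕ) (i : Fin p) :
    ext0 m i.castSucc = m i.castSucc := by simp [ext0]

@[simp] lemma ext0_last (m : Fin (p+1) → ℕ) : ext0 m (Fin.last p) = 0 := by simp [ext0]

-- the field-level coefficient identity
lemma coef_eq (x : Fin p → K) (y : K) (hy : y ≠ 0) (a : Fin p → ℤ)
    (m k : Fin (p+1) → ℕ) (hk : ∑ i, k i = m (Fin.last p)) (c : K) :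
    c * y ^ (∑ i : Fin p, (-(a i)) * (m i.castSucc : ℤ)) *
      ((-1 : K) ^ (m (Fin.last p)) * ((Nat.multinomial univ k : K) *
        ∏ i : Fin (p+1),
          (Fin.lastCases (y ^ (-2 : ℤ))
            (fun j => (a j : K) * x j * y ^ (-(a j) - 1 : ℤ)) i) ^ k i)) =
    (Cco a m (ext0 m + k) : K) *
      ((∏ i : Fin p, x i ^ ((ext0 m + k) i.castSucc
          - m i.castSucc)) *
        y ^ (-(aDot a (ext0 m + k))
          - ((ext0 m + k) (Fin.last p) : ℤ)
          - (m (Fin.last p) : ℤ))) * c := by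
  have hkc : (∑ i : Fin p, (k i.castSucc : ℤ)) =
      (m (Fin.last p) : ℤ) - (k (Fin.last p) : ℤ) := by
    have h := hk
    rw [Fin.sum_univ_castSucc] at h
    have := congrArg (fun n : ℕ => (n : ℤ)) h
    push_cast at this
    linarith
  have hmult : (Nat.multinomial univ k : ℕ) =
      (m (Fin.last p)).factorial /
        ((∏ i : Fin p, (k i.castSucc).factorial) * (k (Fin.last p)).factorial) := by
    rw [Nat.multinomial, hk, Fin.prod_univ_castSucc]
  have hyp2 : ∀ (z : ℤ) (n : ℕ), (y ^ z) ^ n = y ^ (z * n) := fun z n => by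
    rw [zpow_mul, zpow_natCast]
  simp only [Pi.add_apply, ext0_castSucc, ext0_last, Nat.add_sub_cancel_left, zero_add,
    Cco, aDot]
  rw [← hmult]
  rw [Fin.prod_univ_castSucc]
  simp only [Fin.lastCases_castSucc, Fin.lastCases_last, mul_pow, Finset.prod_mul_distrib, hyp2]
  rw [← zpow_sum' y hy]
  push_cast
  have hE : y ^ (∑ i : Fin p, -a i * (m i.castSucc : ℤ)) *
      (y ^ (∑ i : Fin p, (-a i - 1) * (k i.castSucc : ℤ)) *
        y ^ (-2 * (k (Fin.last p) : ℤ))) =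
      y ^ (-∑ i : Fin p, a i * ((m i.castSucc : ℤ) + (k i.castSucc : ℤ)) -
        (k (Fin.last p) : ℤ) - (m (Fin.last p) : ℤ)) := by
    rw [← zpow_add₀ hy, ← zpow_add₀ hy]
    congr 1
    have h1 : (∑ i : Fin p, -a i * (m i.castSucc : ℤ)) +
        (∑ i : Fin p, (-a i - 1) * (k i.castSucc : ℤ)) =
        ∑ i : Fin p, (-(a i * ((m i.castSucc : ℤ) + (k i.castSucc : ℤ))) -
          (k i.castSucc : ℤ)) := by
      rw [← Finset.sum_add_distrib]
      exact Finset.sum_congr rfl fun i _ => by ring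
    rw [← add_assoc, h1, Finset.sum_sub_distrib]
    rw [← Finset.sum_neg_distrib]
    rw [hkc]
    ring
  rw [← hE]
  ring

lemma mon_one_add (s t : Fin (p+1) →₀ ℕ) :
    (monomial (s + t) (1 : K)) = monomial s (1 : K) * monomial t 1 := by
  rw [monomial_mul, one_mul]

lemma aeval_monomial_eq (x : Fin p → K) (y : K) (hy : y ≠ 0) (a : Fin p → ℤ) (d : ℕ)
    (m : Fin (p+1) → ℕ) (hm : ∑ i, m i = d) (c : K) :
    aeval (Fin.lastCases
      (-(∑ i : Fin p, C ((a i : K) * x i * y ^ (-(a i) - 1 : ℤ)) * X i.castSucc)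
        - C (y ^ (-2 : ℤ)) * X (Fin.last p))
      (fun i => C (y ^ (-(a i) : ℤ)) * X i.castSucc))
      (monomial (Finsupp.equivFunOnFinite.symm m) c) =
    ∑ lam ∈ (Finset.Nat.antidiagonalTuple (p+1) d).filter
        (fun lam => ∀ i : Fin p, m i.castSucc ≤ lam i.castSucc),
      monomial (Finsupp.equivFunOnFinite.symm lam) (1 : K) *
        C ((Cco a m lam : K) *
          ((∏ i : Fin p, x i ^ (lam i.castSucc - m i.castSucc)) *
            y ^ (-(aDot a lam) - (lam (Fin.last p) : ℤ) - (m (Fin.last p) : ℤ))) * c) := by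
  classical
  set B : Fin (p+1) → K :=
    Fin.lastCases (y ^ (-2 : ℤ)) (fun j => (a j : K) * x j * y ^ (-(a j) - 1 : ℤ)) with hB
  rw [aeval_monomial, Finsupp.prod_pow]
  simp only [Finsupp.coe_equivFunOnFinite_symm, Fin.prod_univ_castSucc,
    Fin.lastCases_castSucc, Fin.lastCases_last, algebraMap_eq]
  have hbase : (-(∑ i : Fin p, C ((a i : K) * x i * y ^ (-(a i) - 1 : ℤ)) * X i.castSucc)
      - C (y ^ (-2 : ℤ)) * X (Fin.last p) : MvPolynomial (Fin (p+1)) K)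
      = -(∑ i : Fin (p+1), C (B i) * X i) := by
    rw [Fin.sum_univ_castSucc]
    simp only [hB, Fin.lastCases_castSucc, Fin.lastCases_last]
    ring
  rw [hbase, neg_pow, Finset.sum_pow_eq_sum_piAntidiag]
  have hyp2 : ∀ (z : ℤ) (n : ℕ), (y ^ z) ^ n = y ^ (z * n) := fun z n => by
    rw [zpow_mul, zpow_natCast]
  have hfac1 : (∏ i : Fin p, (C (y ^ (-(a i) : ℤ)) * X i.castSucc :
        MvPolynomial (Fin (p+1)) K) ^ m i.castSucc)
      = C (y ^ (∑ i : Fin p, (-(a i)) * (m i.castSucc : ℤ))) *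
        monomial (Finsupp.equivFunOnFinite.symm (ext0 m)) 1 := by
    simp only [mul_pow, Finset.prod_mul_distrib, ← map_pow, ← map_prod, hyp2]
    rw [← zpow_sum' y hy]
    congr 1
    rw [← prod_X_pow' (ext0 m), Fin.prod_univ_castSucc]
    simp [ext0]
  rw [hfac1]
  simp only [Finset.mul_sum]
  refine Finset.sum_nbij' (fun k => ext0 m + k) (fun lam => lam - ext0 m) ?_ ?_ ?_ ?_ ?_
  · -- forward membership
    intro k hk
    rw [Finset.mem_piAntidiag] at hk
    rw [Finset.mem_filter, Finset.Nat.mem_antidiagonalTuple]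
    constructor
    · rw [← hm, Fin.sum_univ_castSucc, Fin.sum_univ_castSucc (f := m)]
      simp only [Pi.add_apply, ext0_castSucc, ext0_last, zero_add, Finset.sum_add_distrib]
      rw [Fin.sum_univ_castSucc (f := k)] at hk
      omega
    · intro i
      simp only [Pi.add_apply, ext0_castSucc]
      exact Nat.le_add_right _ _
  · -- backward membership
    intro lam hlam
    rw [Finset.mem_filter, Finset.Nat.mem_antidiagonalTuple] at hlam
    obtain ⟨hsum, hle⟩ := hlam
    rw [Finset.mem_piAntidiag]
    refine ⟨?_, fun _ _ => Finset.mem_univ _⟩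
    rw [Fin.sum_univ_castSucc]
    simp only [Pi.sub_apply, ext0_castSucc, ext0_last, Nat.sub_zero]
    have h1 : ∑ i : Fin p, (lam i.castSucc - m i.castSucc) + ∑ i : Fin p, m i.castSucc
        = ∑ i : Fin p, lam i.castSucc := by
      rw [← Finset.sum_add_distrib]
      exact Finset.sum_congr rfl fun i _ => Nat.sub_add_cancel (hle i)
    have hm2 : ∑ i : Fin p, m i.castSucc + m (Fin.last p) = d := by
      rw [← hm, Fin.sum_univ_castSucc]
    have hsum2 : ∑ i : Fin p, lam i.castSucc + lam (Fin.last p) = d := by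
      rw [← hsum, Fin.sum_univ_castSucc]
    omega
  · -- left inverse
    intro k hk
    funext j
    induction j using Fin.lastCases with
    | last => simp
    | cast i => simp
  · -- right inverse
    intro lam hlam
    rw [Finset.mem_filter] at hlam
    funext j
    induction j using Fin.lastCases with
    | last => simp
    | cast i => simp [Nat.add_sub_cancel' (hlam.2 i)]
  · -- term equality
    intro k hk
    rw [Finset.mem_piAntidiag] at hk
    have hksum : ∑ i, k i = m (Fin.last p) := hk.1
    have hx : (∏ i : Fin (p+1), ((C (B i) * X i : MvPolynomial (Fin (p+1)) K)) ^ k i)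
        = C (∏ i, B i ^ k i) * monomial (Finsupp.equivFunOnFinite.symm k) 1 := by
      simp only [mul_pow, Finset.prod_mul_distrib, ← map_pow, ← map_prod, prod_X_pow']
    rw [hx, ← coef_eq x y hy a m k hksum c]
    rw [symm_add', mon_one_add]
    simp only [map_mul, map_pow, map_neg, map_one, map_natCast]
    ring

theorem generic_main (x : Fin p → K) (y : K) (hy : y ≠ 0) (d : ℕ) (a : Fin p → ℤ)
    (f : MvPolynomial (Fin (p+1)) K) (hf : f.IsHomogeneous d) :
    aeval (Fin.lastCases
      (-(∑ i : Fin p, C ((a i : K) * x i * y ^ (-(a i) - 1 : ℤ)) * X i.castSucc)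
        - C (y ^ (-2 : ℤ)) * X (Fin.last p))
      (fun i => C (y ^ (-(a i) : ℤ)) * X i.castSucc)) f =
    ∑ lam ∈ Finset.Nat.antidiagonalTuple (p+1) d,
      monomial (Finsupp.equivFunOnFinite.symm lam) (1 : K) *
        C (∑ μ ∈ (Finset.Nat.antidiagonalTuple (p+1) d).filter
              (fun μ => ∀ i : Fin p, μ i.castSucc ≤ lam i.castSucc),
            (Cco a μ lam : K) *
              ((∏ i : Fin p, x i ^ (lam i.castSucc - μ i.castSucc)) *
                y ^ (-(aDot a lam) - (lam (Fin.last p) : ℤ) - (μ (Fin.last p) : ℤ))) *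
              coeff (Finsupp.equivFunOnFinite.symm μ) f) := by
  classical
  set F : (Fin (p+1) → ℕ) → MvPolynomial (Fin (p+1)) K := fun mf =>
    ∑ lam ∈ (Finset.Nat.antidiagonalTuple (p+1) d).filter
        (fun lam => ∀ i : Fin p, mf i.castSucc ≤ lam i.castSucc),
      monomial (Finsupp.equivFunOnFinite.symm lam) (1 : K) *
        C ((Cco a mf lam : K) *
          ((∏ i : Fin p, x i ^ (lam i.castSucc - mf i.castSucc)) *
            y ^ (-(aDot a lam) - (lam (Fin.last p) : ℤ) - (mf (Fin.last p) : ℤ))) *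
          coeff (Finsupp.equivFunOnFinite.symm mf) f) with hF
  have hdeg : ∀ ν ∈ f.support, ∑ i, (ν : Fin (p+1) → ℕ) i = d := by
    intro ν hν
    have h1 := hf (MvPolynomial.mem_support_iff.mp hν)
    have h1' : Finsupp.degree ν = d := by rw [Finsupp.degree_eq_weight_one]; exact h1
    rw [← h1', Finsupp.degree_apply]
    exact (Finset.sum_subset (Finset.subset_univ _)
      (fun i _ hi => Finsupp.notMem_support_iff.mp hi)).symm
  have step : ∀ ν ∈ f.support,
      aeval (Fin.lastCases
        (-(∑ i : Fin p, C ((a i : K) * x i * y ^ (-(a i) - 1 : ℤ)) * X i.castSucc)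
          - C (y ^ (-2 : ℤ)) * X (Fin.last p))
        (fun i => C (y ^ (-(a i) : ℤ)) * X i.castSucc))
        (monomial ν (coeff ν f)) = F ⇑ν := by
    intro ν hν
    have h2 := aeval_monomial_eq x y hy a d (⇑ν) (hdeg ν hν) (coeff ν f)
    rw [Finsupp.equivFunOnFinite_symm_coe] at h2
    rw [h2, hF]
    simp only [Finsupp.equivFunOnFinite_symm_coe]
  calc aeval _ f
      = ∑ ν ∈ f.support, F ⇑ν := by
        conv_lhs => rw [f.as_sum, map_sum]
        exact Finset.sum_congr rfl step
    _ = ∑ mf ∈ f.support.image (⇑Finsupp.equivFunOnFinite), F mf := by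
        rw [Finset.sum_image]
        · rfl
        · intro ν₁ _ ν₂ _ h
          exact Finsupp.equivFunOnFinite.injective h
    _ = ∑ mf ∈ Finset.Nat.antidiagonalTuple (p+1) d, F mf := by
        apply Finset.sum_subset
        · intro mf hmf
          rw [Finset.mem_image] at hmf
          obtain ⟨ν, hν, rfl⟩ := hmf
          rw [Finset.Nat.mem_antidiagonalTuple]
          exact hdeg ν hν
        · intro mf _ hmf
          have hzero : coeff (Finsupp.equivFunOnFinite.symm mf) f = 0 := by
            by_contra hne
            apply hmf
            rw [Finset.mem_image]
            exact ⟨Finsupp.equivFunOnFinite.symm mf,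
              MvPolynomial.mem_support_iff.mpr hne, by simp⟩
          rw [hF]
          simp [hzero]
    _ = _ := by
        simp only [hF, map_sum, Finset.mul_sum, Finset.sum_filter, apply_ite C, map_zero,
          mul_ite, mul_zero]
        exact Finset.sum_comm

end Aux

/-- For any homogeneous polynomial `f` of degree `d`,
`(Sym^d J)(f) = ∑_{λ ⊨ d} z^λ ∑_{μ ≤ λ} C_{μ,λ} m_{μ,λ} [z^μ](f)`. -/
theorem symJ_eq_sum_compositions (p d : ℕ) (hp : 1 ≤ p) (hd : 1 ≤ d) (a : Fin p → ℤ)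
    (f : MvPolynomial (Fin (p+1)) (Kk p)) (hf : f.IsHomogeneous d) :
    symJ a f =
      ∑ lam ∈ Finset.Nat.antidiagonalTuple (p+1) d,
        monomial (Finsupp.equivFunOnFinite.symm lam) (1 : Kk p) *
          C (∑ μ ∈ (Finset.Nat.antidiagonalTuple (p+1) d).filter
                (fun μ => ∀ i : Fin p, μ i.castSucc ≤ lam i.castSucc),
              (Cco a μ lam : Kk p) * mMono a μ lam * coeffOf μ f) := by
  have h := generic_main xv yv yv_ne_zero d a f hf
  simp only [symJ, mMono, coeffOf]
  exact h

end
end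

section
/- Assume a_1 ≤ a_2 ≤ … ≤ a_m ≤ 0 < a_{m+1} ≤ … ≤ a_{n−1} for some 0 ≤ m < n, and assume that a_k ≠ 0 for at least one k ∈ {1,…,n−1}. Let d ≥ 2 and let f_1,…,f_n ∈ R[z_1,…,z_n] and g_1,…,g_n ∈ A[z_1,…,z_n] be homogeneous of degree d in z_1,…,z_n, satisfying in K[z_1,…,z_n] the compatibility conditions g_j = y^{d a_j}·(Sym^d J)(f_j) for all j = 1,…,n−1 and g_n = −y^{2d}·(Sym^d J)(f_n) − Σ_{i=1}^{n−1} a_i x_i^d y^d·(Sym^d J)(f_i). Then for every index j with m+1 ≤ j ≤ n and every composition λ of d with λ_i = 0 for all m+1 ≤ i ≤ n−1, the coefficient [z^λ](f_j) ∈ R = ℂ[x_1,…,x_{n−1},y] has zero constant term, i.e. it vanishes under the evaluation x_1 = ⋯ = x_{n−1} = y = 0. -/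
open MvPolynomial Finset

noncomputable section

variable {p : ℕ}

/-- the coordinate ring `A = ℂ[x_1 y^{-a_1}, …, x_{n-1} y^{-a_{n-1}}, y^{-1}]`, i.e. the
ℂ-subalgebra of `K` generated by the `x_i y^{-a_i}` and `y^{-1}`. -/
def Asub (a : Fin p → ℤ) : Subalgebra ℂ (Kk p) :=
  Algebra.adjoin ℂ ((Set.range fun i : Fin p => xv i * yv ^ (-(a i) : ℤ)) ∪ {yv⁻¹})

/-- the inclusion `R[z_1,…,z_n] → K[z_1,…,z_n]` where `R = ℂ[x_1,…,x_{n-1},y]` -/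
def toK {p : ℕ} :
    MvPolynomial (Fin (p+1)) (MvPolynomial (Fin (p+1)) ℂ) →
      MvPolynomial (Fin (p+1)) (Kk p) :=
  MvPolynomial.map (algebraMap (MvPolynomial (Fin (p+1)) ℂ) (Kk p))

set_option maxHeartbeats 1000000
set_option synthInstance.maxHeartbeats 400000

namespace TanAux

abbrev Rp (p : ℕ) := MvPolynomial (Fin (p+1)) ℂ
abbrev PZ (p : ℕ) := MvPolynomial (Fin (p+1)) (Rp p)

/-- the algebra map from `R = ℂ[x,y]` to the fraction field -/
abbrev φK (p : ℕ) : Rp p →+* Kk p := (algebraMap (Rp p) (Kk p) : Rp p →+* Kk p)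

lemma φK_inj : Function.Injective (φK p) := IsFractionRing.injective _ _

lemma yv_ne_zero : (yv : Kk p) ≠ 0 := by
  intro hy
  exact MvPolynomial.X_ne_zero (R := ℂ) (Fin.last p)
    (φK_inj (by simpa [yv] using hy))

lemma φK_Y_pow (k : ℕ) : φK p ((X (Fin.last p) : Rp p) ^ k) = yv ^ k := by
  rw [map_pow]; rfl

/-- weight of a monomial of `R`: `e + ∑ a_i b_i` -/
def wA (a : Fin p → ℤ) (β : Fin (p+1) →₀ ℕ) : ℤ :=
  (β (Fin.last p) : ℤ) + ∑ i : Fin p, a i * (β i.castSucc : ℤ)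

variable (a : Fin p → ℤ)

lemma wA_add (β γ : Fin (p+1) →₀ ℕ) : wA a (β + γ) = wA a β + wA a γ := by
  simp only [wA, Finsupp.add_apply]
  push_cast
  rw [Finset.sum_congr rfl (fun i _ => mul_add (a i) ((β i.castSucc : ℤ)) ((γ i.castSucc : ℤ))),
    Finset.sum_add_distrib]
  ring

lemma wA_zero : wA a 0 = 0 := by simp [wA]

lemma wA_single_last (k : ℕ) : wA a (Finsupp.single (Fin.last p) k) = k := by
  simp [wA, Finsupp.single_apply, (Fin.castSucc_lt_last _).ne']

lemma wA_single_cs (i : Fin p) (k : ℕ) :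
    wA a (Finsupp.single i.castSucc k) = a i * k := by
  simp only [wA, Finsupp.single_apply]
  rw [if_neg (Fin.castSucc_lt_last i).ne, Finset.sum_eq_single i]
  · simp
  · intro b _ hb
    rw [if_neg (fun h => hb (Fin.castSucc_inj.mp h).symm), Nat.cast_zero, mul_zero]
  · simp

lemma Asub_denom (u : Kk p) (hu : u ∈ Asub a) :
    ∃ (M : ℕ) (P : Rp p), (∀ β ∈ P.support, wA a β ≤ (M : ℤ)) ∧
      φK p P = yv ^ M * u := by
  induction hu using Algebra.adjoin_induction with
  | mem x hx =>
    rcases hx with ⟨i, rfl⟩ | hx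
    · -- generator x_i y^{-a_i}
      refine ⟨(a i).toNat, monomial (Finsupp.single i.castSucc 1 +
          Finsupp.single (Fin.last p) (((a i).toNat : ℤ) - a i).toNat) 1, ?_, ?_⟩
      · intro β hβ
        rw [support_monomial, if_neg one_ne_zero] at hβ
        rcases Finset.mem_singleton.mp hβ with rfl
        rw [wA_add, wA_single_cs, wA_single_last]
        have h1 : ((a i).toNat : ℤ) ≥ a i := Int.self_le_toNat _
        have h2 : ((((a i).toNat : ℤ) - a i).toNat : ℤ) = ((a i).toNat : ℤ) - a i :=
          Int.toNat_of_nonneg (by omega)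
        omega
      · rw [monomial_eq, C_1, one_mul, Finsupp.prod_add_index (by simp) (by simp [pow_add]),
          Finsupp.prod_single_index (by simp), Finsupp.prod_single_index (by simp)]
        rw [map_mul, pow_one, φK_Y_pow]
        have h2 : ((((a i).toNat : ℤ) - a i).toNat : ℤ) = ((a i).toNat : ℤ) - a i :=
          Int.toNat_of_nonneg (by have := Int.self_le_toNat (a i); omega)
        have : (yv : Kk p) ^ ((((a i).toNat : ℤ) - a i).toNat) =
            yv ^ (((a i).toNat : ℤ)) * yv ^ (-(a i)) := by
          rw [← zpow_natCast, h2, sub_eq_add_neg, zpow_add₀ yv_ne_zero]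
        rw [this, zpow_natCast]
        have hxv : φK p (X i.castSucc) = xv i := rfl
        rw [hxv]
        ring
    · rcases Set.mem_singleton_iff.mp hx with rfl
      refine ⟨1, 1, ?_, ?_⟩
      · intro β hβ
        have : β = 0 := by
          by_contra h
          have := mem_support_iff.mp hβ
          rw [coeff_one, if_neg (fun he => h he.symm)] at this
          exact this rfl
        rw [this, wA_zero]; exact zero_le_one
      · rw [map_one, pow_one, mul_inv_cancel₀ yv_ne_zero]
  | algebraMap r =>
    refine ⟨0, C r, ?_, ?_⟩
    · intro β hβ
      have : β = 0 := by
        by_contra h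
        have := mem_support_iff.mp hβ
        rw [coeff_C, if_neg (fun he => h he.symm)] at this
        exact this rfl
      rw [this, wA_zero]; simp
    · rw [pow_zero, one_mul, IsScalarTower.algebraMap_apply ℂ (Rp p) (Kk p)]
      rfl
  | add x y hx hy ihx ihy =>
    obtain ⟨M₁, P₁, h₁, e₁⟩ := ihx
    obtain ⟨M₂, P₂, h₂, e₂⟩ := ihy
    refine ⟨max M₁ M₂,
      monomial (Finsupp.single (Fin.last p) (max M₁ M₂ - M₁)) 1 * P₁ +
      monomial (Finsupp.single (Fin.last p) (max M₁ M₂ - M₂)) 1 * P₂, ?_, ?_⟩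
    · intro β hβ
      have hmem := MvPolynomial.support_add hβ
      have key : ∀ (M' : ℕ) (P' : Rp p), (∀ β ∈ P'.support, wA a β ≤ (M' : ℤ)) → M' ≤ max M₁ M₂ →
          β ∈ (monomial (Finsupp.single (Fin.last p) (max M₁ M₂ - M')) 1 * P').support →
          wA a β ≤ ((max M₁ M₂ : ℕ) : ℤ) := by
        intro M' P' hP' hM' hβ'
        have h := mem_support_iff.mp hβ'
        rw [coeff_monomial_mul'] at h
        by_cases hle : Finsupp.single (Fin.last p) (max M₁ M₂ - M') ≤ β
        · rw [if_pos hle, one_mul] at h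
          have hw := hP' _ (mem_support_iff.mpr h)
          have hβeq : β = (β - Finsupp.single (Fin.last p) (max M₁ M₂ - M')) +
              Finsupp.single (Fin.last p) (max M₁ M₂ - M') := (tsub_add_cancel_of_le hle).symm
          rw [hβeq, wA_add, wA_single_last]
          have : ((max M₁ M₂ - M' : ℕ) : ℤ) = (max M₁ M₂ : ℤ) - M' := by
            push_cast [Nat.cast_sub hM']; ring
          omega
        · rw [if_neg hle] at h; exact absurd rfl h
      rcases Finset.mem_union.mp hmem with h | h
      · exact key M₁ P₁ h₁ (le_max_left _ _) h
      · exact key M₂ P₂ h₂ (le_max_right _ _) h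
    · rw [(φK p).map_add, (φK p).map_mul, (φK p).map_mul]
      have hm : ∀ k : ℕ, φK p (monomial (Finsupp.single (Fin.last p) k) (1:ℂ)) = yv ^ k := by
        intro k
        rw [← MvPolynomial.X_pow_eq_monomial, φK_Y_pow]
      rw [hm, hm, e₁, e₂]
      rw [← mul_assoc, ← pow_add, ← mul_assoc, ← pow_add,
        Nat.sub_add_cancel (le_max_left _ _), Nat.sub_add_cancel (le_max_right _ _), mul_add]
  | mul x y hx hy ihx ihy =>
    obtain ⟨M₁, P₁, h₁, e₁⟩ := ihx
    obtain ⟨M₂, P₂, h₂, e₂⟩ := ihy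
    refine ⟨M₁ + M₂, P₁ * P₂, ?_, ?_⟩
    · intro β hβ
      have := MvPolynomial.support_mul _ _ hβ
      rw [Finset.mem_add] at this
      obtain ⟨β₁, hβ₁, β₂, hβ₂, rfl⟩ := this
      rw [wA_add]
      have := h₁ _ hβ₁; have := h₂ _ hβ₂
      push_cast
      omega
    · rw [(φK p).map_mul, e₁, e₂, pow_add]; ring


variable (N : ℕ)

def ni (i : Fin p) : ℕ := ((N : ℤ) - a i).toNat

lemma ni_cast (hNa : ∀ i, a i + 1 ≤ (N:ℤ)) (i : Fin p) : (ni a N i : ℤ) = (N:ℤ) - a i :=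
  Int.toNat_of_nonneg (by have := hNa i; omega)

lemma ni_pos (hNa : ∀ i, a i + 1 ≤ (N:ℤ)) (i : Fin p) : 1 ≤ ni a N i := by
  have := ni_cast a N hNa i; have := hNa i; omega

def umon : Fin (p+1) → (Fin (p+1) →₀ ℕ) :=
  Fin.lastCases (Finsupp.single (Fin.last p) (N-2))
    (fun i => Finsupp.single i.castSucc 1 + Finsupp.single (Fin.last p) (ni a N i - 1))

def ucoef : Fin (p+1) → ℂ := Fin.lastCases 1 (fun i => (a i : ℂ))

def uu (v : Fin (p+1)) : Rp p := monomial (umon a N v) (ucoef a v)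

/-- the polynomial substitution `σ_N`: `z_i ↦ y^{N-a_i} z_i`,
`z_n ↦ -∑ a_i x_i y^{N-a_i-1} z_i - y^{N-2} z_n` -/
def sz : Fin (p+1) → PZ p :=
  Fin.lastCases (- ∑ w, C (uu a N w) * X w)
    (fun i => C ((X (Fin.last p) : Rp p) ^ ni a N i) * X i.castSucc)

def σσ (f : PZ p) : PZ p := eval₂ C (sz a N) f

/-- the substitution images of symJ -/
def symS : Fin (p+1) → MvPolynomial (Fin (p+1)) (Kk p) :=
  Fin.lastCases
    (-(∑ i : Fin p, C ((a i : Kk p) * xv i * yv ^ (-(a i) - 1 : ℤ)) * X i.castSucc)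
      - C (yv ^ (-2 : ℤ)) * X (Fin.last p))
    (fun i => C (yv ^ (-(a i) : ℤ)) * X i.castSucc)

lemma symJ_eq_eval₂ (f : PZ p) :
    symJ a (toK f) = eval₂ ((C : Kk p →+* MvPolynomial (Fin (p+1)) (Kk p)).comp (φK p))
      (symS a) f := by
  rw [symJ, toK, aeval_def]
  exact eval₂_map _ _ _ _

lemma map_sz (hNa : ∀ i, a i + 1 ≤ (N:ℤ)) (hN2 : 2 ≤ N) (v : Fin (p+1)) :
    MvPolynomial.map (φK p) (sz a N v) = C (yv ^ (N:ℤ)) * symS a v := by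
  have hy := yv_ne_zero (p := p)
  induction v using Fin.lastCases with
  | cast i =>
    rw [sz, symS, Fin.lastCases_castSucc, Fin.lastCases_castSucc, map_mul,
      MvPolynomial.map_C, MvPolynomial.map_X, φK_Y_pow, ← mul_assoc, ← C_mul]
    congr 2
    rw [← zpow_natCast, ni_cast a N hNa i, sub_eq_add_neg, zpow_add₀ hy]
  | last =>
    rw [sz, symS, Fin.lastCases_last, Fin.lastCases_last, map_neg, map_sum]
    rw [Fin.sum_univ_castSucc]
    have hlast : MvPolynomial.map (φK p) (C (uu a N (Fin.last p)) * X (Fin.last p)) =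
        C (yv ^ (N:ℤ) * yv ^ (-2 : ℤ)) * X (Fin.last p) := by
      rw [map_mul, MvPolynomial.map_C, MvPolynomial.map_X]
      congr 2
      rw [uu, umon, ucoef, Fin.lastCases_last, Fin.lastCases_last,
        ← MvPolynomial.X_pow_eq_monomial, φK_Y_pow, ← zpow_natCast, ← zpow_add₀ hy]
      congr 1
      have : ((N - 2 : ℕ) : ℤ) = (N:ℤ) + (-2) := by omega
      rw [this]
    have hcs : ∀ i : Fin p, MvPolynomial.map (φK p) (C (uu a N i.castSucc) * X i.castSucc) =
        C (yv ^ (N:ℤ) * ((a i : Kk p) * xv i * yv ^ (-(a i) - 1 : ℤ))) * X i.castSucc := by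
      intro i
      rw [map_mul, MvPolynomial.map_C, MvPolynomial.map_X]
      congr 2
      rw [uu, umon, ucoef, Fin.lastCases_castSucc, Fin.lastCases_castSucc, monomial_eq,
        Finsupp.prod_add_index (by simp) (by simp [pow_add]),
        Finsupp.prod_single_index (by simp), Finsupp.prod_single_index (by simp), pow_one]
      rw [map_mul, map_mul, φK_Y_pow]
      have h1 : φK p (C ((a i : ℂ))) = ((a i : ℤ) : Kk p) := by
        have ht := IsScalarTower.algebraMap_apply ℂ (Rp p) (Kk p) ((a i : ℂ))
        rw [MvPolynomial.algebraMap_eq] at ht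
        rw [← ht, map_intCast]
      have h2 : φK p (X i.castSucc) = xv i := rfl
      have h3 : (yv : Kk p) ^ ((ni a N i - 1 : ℕ)) = yv ^ (N:ℤ) * yv ^ (-(a i) - 1 : ℤ) := by
        rw [← zpow_natCast, ← zpow_add₀ hy]
        congr 1
        have h4 := ni_cast a N hNa i
        have h5 := ni_pos a N hNa i
        omega
      rw [h1, h2, h3]
      ring
    have hS2 : ∑ i : Fin p, (C (yv ^ (N:ℤ) * ((a i : Kk p) * xv i * yv ^ (-(a i) - 1 : ℤ))) : MvPolynomial (Fin (p+1)) (Kk p)) * X i.castSucc =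
        C (yv ^ (N:ℤ)) * ∑ i : Fin p, C ((a i : Kk p) * xv i * yv ^ (-(a i) - 1 : ℤ)) * X i.castSucc := by
      rw [Finset.mul_sum]
      exact Finset.sum_congr rfl fun i _ => by rw [C_mul, mul_assoc]
    rw [Finset.sum_congr rfl (fun i _ => hcs i), hlast, hS2, C_mul]
    ring

lemma eval₂_C_mul_of_homog {R S σ : Type*} [CommSemiring R] [CommSemiring S] [Fintype σ]
    (f : R →+* S) (c : S) (g : σ → S) (q : MvPolynomial σ R) (d : ℕ)
    (h : q.IsHomogeneous d) :
    eval₂ f (fun v => c * g v) q = c ^ d * eval₂ f g q := by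
  rw [eval₂_eq', eval₂_eq', Finset.mul_sum]
  refine Finset.sum_congr rfl fun μ hμ => ?_
  have hdeg : ∑ v, μ v = d := by
    have h1 := h (mem_support_iff.mp hμ)
    replace h1 : μ.degree = d := by rw [Finsupp.degree_eq_weight_one]; exact h1
    have h2 : μ.degree = ∑ v, μ v := Finset.sum_subset (Finset.subset_univ _)
      (fun v _ hv => Finsupp.notMem_support_iff.mp hv)
    omega
  calc f (coeff μ q) * ∏ v, (c * g v) ^ μ v
      = f (coeff μ q) * ((∏ v, c ^ μ v) * ∏ v, g v ^ μ v) := by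
        rw [← Finset.prod_mul_distrib]
        simp_rw [mul_pow]
    _ = c ^ d * (f (coeff μ q) * ∏ v, g v ^ μ v) := by
        rw [Finset.prod_pow_eq_pow_sum, hdeg]; ring

lemma map_σσ (hNa : ∀ i, a i + 1 ≤ (N:ℤ)) (hN2 : 2 ≤ N) {d : ℕ} (f : PZ p)
    (hf : f.IsHomogeneous d) :
    MvPolynomial.map (φK p) (σσ a N f) = C (yv ^ (N * d)) * symJ a (toK f) := by
  rw [σσ, eval₂_comp_left (MvPolynomial.map (φK p)) C (sz a N) f]
  have h1 : (MvPolynomial.map (φK p)).comp (C : Rp p →+* PZ p) =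
      (C : Kk p →+* MvPolynomial (Fin (p+1)) (Kk p)).comp (φK p) :=
    RingHom.ext fun r => MvPolynomial.map_C _ _
  have h2 : (MvPolynomial.map (φK p)) ∘ (sz a N) = fun v => C (yv ^ (N:ℤ)) * symS a v :=
    funext fun v => map_sz a N hNa hN2 v
  have hz : ((yv : Kk p) ^ (N:ℤ)) ^ d = yv ^ (N * d) := by
    rw [← zpow_natCast ((yv : Kk p) ^ (N:ℤ)) d, ← zpow_mul, ← zpow_natCast yv (N*d)]
    norm_cast
  rw [h1, h2, eval₂_C_mul_of_homog _ _ _ _ d hf, symJ_eq_eval₂, ← C_pow, hz]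


lemma φK_monoY (k : ℕ) : φK p (monomial (Finsupp.single (Fin.last p) k) (1:ℂ)) = yv ^ k := by
  rw [← MvPolynomial.X_pow_eq_monomial, φK_Y_pow]

/-- the master polynomial `H = y^d σ(F_n) + ∑ a_i x_i^d σ(F_i)` -/
def Hp (d : ℕ) (F : Fin (p+1) → PZ p) : PZ p :=
  C ((X (Fin.last p) : Rp p) ^ d) * σσ a N (F (Fin.last p)) +
    ∑ i : Fin p, C ((monomial (Finsupp.single i.castSucc d) ((a i : ℂ))) : Rp p) *
      σσ a N (F i.castSucc)

lemma map_Hp (hNa : ∀ i, a i + 1 ≤ (N:ℤ)) (hN2 : 2 ≤ N) {d : ℕ}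
    (F : Fin (p+1) → PZ p) (g : MvPolynomial (Fin (p+1)) (Kk p))
    (hF : ∀ j, (F j).IsHomogeneous d)
    (hCn : g =
      -(C (yv ^ (2 * d)) * symJ a (toK (F (Fin.last p)))) -
        ∑ i : Fin p, C ((a i : Kk p) * xv i ^ d * yv ^ d) * symJ a (toK (F i.castSucc))) :
    MvPolynomial.map (φK p) (Hp a N d F) = -(C (yv ^ ((N-1)*d)) * g) := by
  have hexp : d + N * d = (N-1)*d + 2*d := by
    have hN1 : N - 1 + 1 = N := by omega
    calc d + N*d = d + ((N-1)+1)*d := by rw [hN1]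
    _ = (N-1)*d + 2*d := by ring
  have hexp2 : N * d = (N-1)*d + d := by
    have hN1 : N - 1 + 1 = N := by omega
    calc N*d = ((N-1)+1)*d := by rw [hN1]
    _ = (N-1)*d + d := by ring
  have hAi : ∀ i : Fin p, φK p (monomial (Finsupp.single i.castSucc d) ((a i : ℂ))) =
      ((a i : ℤ) : Kk p) * xv i ^ d := by
    intro i
    rw [monomial_eq, Finsupp.prod_single_index (by simp), (φK p).map_mul, (φK p).map_pow]
    have h1 : φK p (C ((a i : ℂ))) = ((a i : ℤ) : Kk p) := by
      have ht := IsScalarTower.algebraMap_apply ℂ (Rp p) (Kk p) ((a i : ℂ))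
      rw [MvPolynomial.algebraMap_eq] at ht
      rw [← ht, map_intCast]
    rw [h1]
    rfl
  have hterm : ∀ i : Fin p, MvPolynomial.map (φK p)
      (C ((monomial (Finsupp.single i.castSucc d) ((a i : ℂ))) : Rp p) * σσ a N (F i.castSucc)) =
      C (yv ^ ((N-1)*d) * ((a i : Kk p) * xv i ^ d * yv ^ d)) * symJ a (toK (F i.castSucc)) := by
    intro i
    rw [(MvPolynomial.map (φK p)).map_mul, MvPolynomial.map_C, hAi,
      map_σσ a N hNa hN2 _ (hF _), ← mul_assoc, ← C_mul]
    congr 2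
    rw [hexp2, pow_add]
    ring
  have hS : ∑ i : Fin p, (C (yv ^ ((N-1)*d) * ((a i : Kk p) * xv i ^ d * yv ^ d)) :
        MvPolynomial (Fin (p+1)) (Kk p)) * symJ a (toK (F i.castSucc)) =
      C (yv ^ ((N-1)*d)) *
        ∑ i : Fin p, C ((a i : Kk p) * xv i ^ d * yv ^ d) * symJ a (toK (F i.castSucc)) := by
    rw [Finset.mul_sum]
    exact Finset.sum_congr rfl fun i _ => by rw [C_mul, mul_assoc]
  rw [Hp, (MvPolynomial.map (φK p)).map_add, (MvPolynomial.map (φK p)).map_mul,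
    MvPolynomial.map_C, φK_Y_pow, map_σσ a N hNa hN2 _ (hF _),
    map_sum (MvPolynomial.map (φK p)) _ _, Finset.sum_congr rfl (fun i _ => hterm i), hS, hCn]
  rw [← mul_assoc, ← C_mul, ← pow_add, hexp, pow_add, C_mul, mul_assoc]
  ring

lemma KL {d : ℕ} (F : Fin (p+1) → PZ p) (g : MvPolynomial (Fin (p+1)) (Kk p))
    (hkey : MvPolynomial.map (φK p) (Hp a N d F) = -(C (yv ^ ((N-1)*d)) * g))
    (hgA : ∀ c, coeff c g ∈ Asub a) :
    ∀ (lam γ : Fin (p+1) →₀ ℕ), (((N-1)*d : ℕ) : ℤ) < wA a γ →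
      coeff γ (coeff lam (Hp a N d F)) = 0 := by
  intro lam γ hw
  by_contra hne
  obtain ⟨M, P, hP, hPe⟩ := Asub_denom a _ (hgA lam)
  set c := coeff lam (Hp a N d F) with hc
  have h1 : φK p c = -(yv ^ ((N-1)*d) * coeff lam g) := by
    have h := congrArg (coeff lam) hkey
    rw [coeff_map, coeff_neg, coeff_C_mul] at h
    exact h
  have h2 : φK p (monomial (Finsupp.single (Fin.last p) M) 1 * c +
      monomial (Finsupp.single (Fin.last p) ((N-1)*d)) 1 * P) = 0 := by
    rw [(φK p).map_add, (φK p).map_mul, (φK p).map_mul, φK_monoY, φK_monoY, h1, hPe]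
    ring
  have h3 : monomial (Finsupp.single (Fin.last p) M) 1 * c +
      monomial (Finsupp.single (Fin.last p) ((N-1)*d)) 1 * P = 0 := by
    apply φK_inj
    rw [h2, (φK p).map_zero]
  have h4 := congrArg (coeff (γ + Finsupp.single (Fin.last p) M)) h3
  rw [coeff_add, coeff_monomial_mul', coeff_monomial_mul', coeff_zero] at h4
  have hle1 : Finsupp.single (Fin.last p) M ≤ γ + Finsupp.single (Fin.last p) M :=
    le_add_self
  rw [if_pos hle1, add_tsub_cancel_right, one_mul] at h4
  by_cases hle2 : Finsupp.single (Fin.last p) ((N-1)*d) ≤ γ + Finsupp.single (Fin.last p) M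
  · rw [if_pos hle2, one_mul] at h4
    have hcoeffP : coeff (γ + Finsupp.single (Fin.last p) M -
        Finsupp.single (Fin.last p) ((N-1)*d)) P ≠ 0 := by
      intro h0
      rw [h0, add_zero] at h4
      exact hne h4
    have hwβ := hP _ (mem_support_iff.mpr hcoeffP)
    have hβ2 : (γ + Finsupp.single (Fin.last p) M - Finsupp.single (Fin.last p) ((N-1)*d)) +
        Finsupp.single (Fin.last p) ((N-1)*d) = γ + Finsupp.single (Fin.last p) M :=
      tsub_add_cancel_of_le hle2
    have h5 := congrArg (wA a) hβ2
    rw [wA_add, wA_add, wA_single_last, wA_single_last] at h5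
    omega
  · rw [if_neg hle2, add_zero] at h4
    exact hne h4


/-! ### coefficient machinery -/

def Lam : MvPolynomial (Fin (p+1)) ℂ := ∑ v, X v

def mlt (ρ : Fin (p+1) →₀ ℕ) (t : ℕ) : ℂ := coeff ρ ((Lam : MvPolynomial (Fin (p+1)) ℂ) ^ t)

lemma coeff_mul_Lam (q : MvPolynomial (Fin (p+1)) ℂ) (ρ : Fin (p+1) →₀ ℕ) :
    coeff ρ (q * Lam) = ∑ v ∈ ρ.support, coeff (ρ - Finsupp.single v 1) q := by
  rw [Lam, Finset.mul_sum, coeff_sum,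
    Finset.sum_congr rfl (fun v _ => coeff_mul_X' ρ v q)]
  rw [Finset.sum_ite_mem, Finset.univ_inter]

lemma fs_single_sub (v : Fin (p+1)) (s t : ℕ) :
    Finsupp.single v (s + t) - Finsupp.single v t = Finsupp.single v s := by
  ext u
  rw [Finsupp.tsub_apply]
  simp only [Finsupp.single_apply]
  split_ifs <;> omega

lemma mlt_def (ρ : Fin (p+1) →₀ ℕ) (t : ℕ) :
    coeff ρ ((Lam : MvPolynomial (Fin (p+1)) ℂ) ^ t) = mlt ρ t := rfl

lemma mlt_single (v : Fin (p+1)) : ∀ t, mlt (Finsupp.single v t) t = 1 := by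
  intro t
  induction t with
  | zero => simp [mlt]
  | succ t ih =>
    rw [mlt, pow_succ, coeff_mul_Lam,
      Finsupp.support_single_ne_zero v (Nat.succ_ne_zero t), Finset.sum_singleton]
    have h : Finsupp.single v (t+1) - Finsupp.single v 1 = Finsupp.single v t :=
      fs_single_sub v t 1
    rw [h, mlt_def]
    exact ih

lemma mlt_two (w v : Fin (p+1)) (hwv : w ≠ v) :
    ∀ t, mlt (Finsupp.single w 1 + Finsupp.single v t) (t+1) = (t+1 : ℂ) := by
  intro t
  induction t with
  | zero =>
    rw [Finsupp.single_zero, add_zero, zero_add, mlt, pow_one, Lam, coeff_sum,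
      Finset.sum_congr rfl (fun u _ => coeff_X' u (Finsupp.single w 1))]
    rw [Finset.sum_eq_single w
      (fun u _ hu => if_neg (fun h => hu ((Finsupp.single_left_inj one_ne_zero).mp h)))
      (fun h => absurd (Finset.mem_univ w) h), if_pos rfl]
    norm_num
  | succ t ih =>
    rw [mlt, pow_succ, coeff_mul_Lam]
    have hsupp : (Finsupp.single w 1 + Finsupp.single v (t+1)).support = {w, v} := by
      rw [Finsupp.support_add_eq, Finsupp.support_single_ne_zero w one_ne_zero,
        Finsupp.support_single_ne_zero v (Nat.succ_ne_zero t)]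
      · rfl
      · rw [Finsupp.support_single_ne_zero w one_ne_zero,
          Finsupp.support_single_ne_zero v (Nat.succ_ne_zero t)]
        exact Finset.disjoint_singleton.mpr hwv
    rw [hsupp, Finset.sum_pair hwv]
    have h1 : Finsupp.single w 1 + Finsupp.single v (t+1) - Finsupp.single w 1 =
        Finsupp.single v (t+1) := add_tsub_cancel_left _ _
    have h2 : Finsupp.single w 1 + Finsupp.single v (t+1) - Finsupp.single v 1 =
        Finsupp.single w 1 + Finsupp.single v t := by
      rw [add_tsub_assoc_of_le, fs_single_sub]
      exact Finsupp.single_le_iff.mpr (by simp)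
    rw [h1, h2, mlt_def, mlt_def, mlt_single, ih]
    push_cast
    ring

def Dm : MvPolynomial (Fin (p+1)) ℂ →+* PZ p :=
  (eval₂Hom ((C : Rp p →+* PZ p).comp (algebraMap ℂ (Rp p)))
    (fun v => C (uu a N v) * X v) : MvPolynomial (Fin (p+1)) ℂ →+* PZ p)

def Um (ρ : Fin (p+1) →₀ ℕ) : Fin (p+1) →₀ ℕ := ∑ v, ρ v • umon a N v

def Uc (ρ : Fin (p+1) →₀ ℕ) : ℂ := ∏ v, ucoef a v ^ ρ v

lemma prod_monomial {ι : Type*} (s : Finset ι) (f : ι → (Fin (p+1) →₀ ℕ)) (c : ι → ℂ) :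
    (∏ i ∈ s, (monomial (f i) (c i) : Rp p)) = monomial (∑ i ∈ s, f i) (∏ i ∈ s, c i) := by
  induction s using Finset.cons_induction with
  | empty => simp [monomial_zero']
  | cons i s hi ih => rw [Finset.prod_cons, Finset.sum_cons, Finset.prod_cons, ih, monomial_mul]

lemma uu_pow_prod (ρ : Fin (p+1) →₀ ℕ) :
    (∏ v, (uu a N v) ^ ρ v : Rp p) = monomial (Um a N ρ) (Uc a ρ) := by
  rw [Um, Uc, ← prod_monomial]
  exact Finset.prod_congr rfl fun v _ => by rw [uu, monomial_pow]

lemma prod_X_pow (ρ : Fin (p+1) →₀ ℕ) :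
    (∏ v, (X v : PZ p) ^ ρ v) = monomial ρ (1 : Rp p) := by
  rw [monomial_eq, C_1, one_mul, Finsupp.prod_fintype _ _ (fun v => pow_zero _)]

lemma Dm_monomial (ρ : Fin (p+1) →₀ ℕ) (c : ℂ) :
    Dm a N (monomial ρ c) = monomial ρ ((monomial (Um a N ρ) (c * Uc a ρ) : Rp p)) := by
  rw [Dm, coe_eval₂Hom, eval₂_monomial, Finsupp.prod_fintype _ _ (fun v => pow_zero _)]
  have : ∀ v : Fin (p+1), (C (uu a N v) * X v) ^ ρ v =
      C ((uu a N v) ^ ρ v) * (X v) ^ ρ v := by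
    intro v; rw [mul_pow, C_pow]
  rw [Finset.prod_congr rfl (fun v _ => this v), Finset.prod_mul_distrib,
    ← map_prod (C : Rp p →+* PZ p), uu_pow_prod, prod_X_pow]
  rw [RingHom.comp_apply, C_mul_monomial, C_mul_monomial, mul_one]
  congr 1
  rw [MvPolynomial.algebraMap_eq, C_mul_monomial]

lemma coeff_Dm (q : MvPolynomial (Fin (p+1)) ℂ) (ρ : Fin (p+1) →₀ ℕ) :
    coeff ρ (Dm a N q) = monomial (Um a N ρ) (coeff ρ q * Uc a ρ) := by
  conv_lhs => rw [as_sum q, map_sum (Dm a N)]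
  rw [coeff_sum, Finset.sum_congr rfl (fun σ' _ => by rw [Dm_monomial, coeff_monomial])]
  rw [Finset.sum_ite_eq' q.support ρ _]
  by_cases h : ρ ∈ q.support
  · rw [if_pos h]
  · rw [if_neg h, notMem_support_iff.mp h, zero_mul, monomial_zero]

lemma sz_last_eq : sz a N (Fin.last p) = - Dm a N (Lam) := by
  rw [sz, Fin.lastCases_last, Lam, map_sum (Dm a N)]
  congr 1
  refine Finset.sum_congr rfl fun v _ => ?_
  rw [Dm, coe_eval₂Hom, eval₂_X]

lemma coeff_sz_last_pow (t : ℕ) (ρ : Fin (p+1) →₀ ℕ) :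
    coeff ρ ((sz a N (Fin.last p)) ^ t) =
      monomial (Um a N ρ) ((-1)^t * mlt ρ t * Uc a ρ) := by
  rw [sz_last_eq, neg_pow ((Dm a N) Lam) t, ← map_pow (Dm a N)]
  have h1 : ((-1 : PZ p) ^ t) = C ((-1 : Rp p)^t) := by
    rw [C_pow, map_neg, map_one]
  have h2 : ((-1 : Rp p) ^ t) = C ((-1 : ℂ)^t) := by
    rw [C_pow, map_neg, map_one]
  rw [h1, coeff_C_mul, h2, coeff_Dm, C_mul_monomial, ← mlt, mul_assoc]

def E1 (μ : Fin (p+1) →₀ ℕ) : ℕ := ∑ i : Fin p, ni a N i * μ i.castSucc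

lemma prod_X_pow_erase (μ : Fin (p+1) →₀ ℕ) :
    ∏ i : Fin p, (X (i.castSucc) : PZ p) ^ (μ i.castSucc) =
      monomial (Finsupp.erase (Fin.last p) μ) (1 : Rp p) := by
  rw [monomial_eq, C_1, one_mul, Finsupp.prod_fintype _ _ (fun v => pow_zero _),
    Fin.prod_univ_castSucc, Finsupp.erase_same, pow_zero, mul_one]
  exact Finset.prod_congr rfl fun i _ => by
    rw [Finsupp.erase_ne (Fin.castSucc_lt_last i).ne]

lemma prod_sz (μ : Fin (p+1) →₀ ℕ) :
    ∏ v, (sz a N v) ^ μ v =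
      monomial (Finsupp.erase (Fin.last p) μ) ((X (Fin.last p) : Rp p) ^ E1 a N μ) *
        (sz a N (Fin.last p)) ^ (μ (Fin.last p)) := by
  rw [Fin.prod_univ_castSucc]
  congr 1
  have h : ∀ i : Fin p, (sz a N i.castSucc) ^ (μ i.castSucc) =
      C ((X (Fin.last p) : Rp p) ^ (ni a N i * μ i.castSucc)) *
        (X i.castSucc : PZ p) ^ (μ i.castSucc) := by
    intro i
    rw [sz, Fin.lastCases_castSucc, mul_pow, ← C_pow, ← pow_mul]
  rw [Finset.prod_congr rfl (fun i _ => h i), Finset.prod_mul_distrib,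
    ← map_prod (C : Rp p →+* PZ p), Finset.prod_pow_eq_pow_sum, prod_X_pow_erase,
    C_mul_monomial, mul_one]
  rfl

def MonM (μ lam : Fin (p+1) →₀ ℕ) : Fin (p+1) →₀ ℕ :=
  Finsupp.single (Fin.last p) (E1 a N μ) + Um a N (lam - Finsupp.erase (Fin.last p) μ)

def ScM (μ lam : Fin (p+1) →₀ ℕ) : ℂ :=
  (-1)^(μ (Fin.last p)) * mlt (lam - Finsupp.erase (Fin.last p) μ) (μ (Fin.last p)) *
    Uc a (lam - Finsupp.erase (Fin.last p) μ)

lemma coeff_lam_prod_sz (μ lam : Fin (p+1) →₀ ℕ) :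
    coeff lam (∏ v, (sz a N v) ^ μ v) =
      if Finsupp.erase (Fin.last p) μ ≤ lam
        then (monomial (MonM a N μ lam) (ScM a μ lam) : Rp p) else 0 := by
  rw [prod_sz, coeff_monomial_mul']
  split_ifs with h
  · rw [coeff_sz_last_pow, MvPolynomial.X_pow_eq_monomial, monomial_mul, one_mul]
    rfl
  · rfl

lemma coeff_coeff_sigma (f : PZ p) (lam γ : Fin (p+1) →₀ ℕ) :
    coeff γ (coeff lam (σσ a N f)) =
      ∑ μ ∈ f.support, (if Finsupp.erase (Fin.last p) μ ≤ lam ∧ MonM a N μ lam ≤ γ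
        then ScM a μ lam * coeff (γ - MonM a N μ lam) (coeff μ f) else 0) := by
  rw [σσ, eval₂_eq', coeff_sum,
    Finset.sum_congr rfl (fun μ _ => by rw [coeff_C_mul, coeff_lam_prod_sz]), coeff_sum]
  refine Finset.sum_congr rfl fun μ _ => ?_
  by_cases h1 : Finsupp.erase (Fin.last p) μ ≤ lam
  · rw [if_pos h1, coeff_mul_monomial']
    by_cases h2 : MonM a N μ lam ≤ γ
    · rw [if_pos h2, if_pos ⟨h1, h2⟩, mul_comm]
    · rw [if_neg h2, if_neg (fun hc => h2 hc.2)]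
  · rw [if_neg h1, mul_zero, coeff_zero, if_neg (fun hc => h1 hc.1)]

/-! ### component computations -/

lemma umon_cs (i : Fin p) : umon a N i.castSucc =
    Finsupp.single i.castSucc 1 + Finsupp.single (Fin.last p) (ni a N i - 1) := by
  rw [umon, Fin.lastCases_castSucc]

lemma umon_last : umon a N (Fin.last p) = Finsupp.single (Fin.last p) (N-2) := by
  rw [umon, Fin.lastCases_last]

lemma ucoef_cs (i : Fin p) : ucoef a i.castSucc = (a i : ℂ) := by
  rw [ucoef, Fin.lastCases_castSucc]

lemma ucoef_last : ucoef a (Fin.last p) = 1 := by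
  rw [ucoef, Fin.lastCases_last]

lemma Um_add (β γ : Fin (p+1) →₀ ℕ) : Um a N (β + γ) = Um a N β + Um a N γ := by
  rw [Um, Um, Um, ← Finset.sum_add_distrib]
  exact Finset.sum_congr rfl fun v _ => by rw [Finsupp.add_apply, add_smul]

lemma Um_single (v : Fin (p+1)) (t : ℕ) : Um a N (Finsupp.single v t) = t • umon a N v := by
  rw [Um, Finset.sum_eq_single v]
  · rw [Finsupp.single_eq_same]
  · intro w _ hw
    rw [Finsupp.single_eq_of_ne' (Ne.symm hw), zero_smul]
  · intro h
    exact absurd (Finset.mem_univ v) h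

lemma Uc_add (β γ : Fin (p+1) →₀ ℕ) : Uc a (β + γ) = Uc a β * Uc a γ := by
  rw [Uc, Uc, Uc, ← Finset.prod_mul_distrib]
  exact Finset.prod_congr rfl fun v _ => by rw [Finsupp.add_apply, pow_add]

lemma Uc_single (v : Fin (p+1)) (t : ℕ) : Uc a (Finsupp.single v t) = ucoef a v ^ t := by
  rw [Uc, Finset.prod_eq_single v]
  · rw [Finsupp.single_eq_same]
  · intro w _ hw
    rw [Finsupp.single_eq_of_ne' (Ne.symm hw), pow_zero]
  · intro h
    exact absurd (Finset.mem_univ v) h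

lemma Um_apply_cs (ρ : Fin (p+1) →₀ ℕ) (i : Fin p) :
    Um a N ρ i.castSucc = ρ i.castSucc := by
  rw [Um, Finsupp.finset_sum_apply]
  rw [Finset.sum_congr rfl (fun v _ => by rw [Finsupp.smul_apply, smul_eq_mul])]
  rw [Fin.sum_univ_castSucc]
  have hl : (umon a N (Fin.last p)) i.castSucc = 0 := by
    rw [umon_last, Finsupp.single_eq_of_ne' (Fin.castSucc_lt_last i).ne']
  rw [hl, mul_zero, add_zero, Finset.sum_eq_single i]
  · rw [umon_cs, Finsupp.add_apply, Finsupp.single_eq_same,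
      Finsupp.single_eq_of_ne' (Fin.castSucc_lt_last i).ne', add_zero, mul_one]
  · intro j _ hj
    rw [umon_cs, Finsupp.add_apply,
      Finsupp.single_eq_of_ne' (fun h => hj (Fin.castSucc_inj.mp h)),
      Finsupp.single_eq_of_ne' (Fin.castSucc_lt_last i).ne', add_zero, mul_zero]
  · intro h
    exact absurd (Finset.mem_univ i) h

lemma rho_cs (μ lam : Fin (p+1) →₀ ℕ) (i : Fin p) :
    (lam - Finsupp.erase (Fin.last p) μ) i.castSucc = lam i.castSucc - μ i.castSucc := by
  rw [Finsupp.tsub_apply, Finsupp.erase_ne (Fin.castSucc_lt_last i).ne]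

lemma rho_last (μ lam : Fin (p+1) →₀ ℕ) :
    (lam - Finsupp.erase (Fin.last p) μ) (Fin.last p) = lam (Fin.last p) := by
  rw [Finsupp.tsub_apply, Finsupp.erase_same, Nat.sub_zero]

lemma erase_le_of (μ lam : Fin (p+1) →₀ ℕ) (h : Finsupp.erase (Fin.last p) μ ≤ lam)
    (i : Fin p) : μ i.castSucc ≤ lam i.castSucc := by
  have := Finsupp.le_def.mp h i.castSucc
  rwa [Finsupp.erase_ne (Fin.castSucc_lt_last i).ne] at this

lemma rho_eq_single (μ lam : Fin (p+1) →₀ ℕ) (hν : ∀ i : Fin p, μ i.castSucc = lam i.castSucc) :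
    lam - Finsupp.erase (Fin.last p) μ = Finsupp.single (Fin.last p) (lam (Fin.last p)) := by
  ext v
  induction v using Fin.lastCases with
  | last => rw [rho_last, Finsupp.single_eq_same]
  | cast i =>
    rw [rho_cs, hν i, Nat.sub_self,
      Finsupp.single_eq_of_ne' (Fin.castSucc_lt_last i).ne']


lemma MonM_apply_cs (μ lam : Fin (p+1) →₀ ℕ) (i : Fin p) :
    MonM a N μ lam i.castSucc = lam i.castSucc - μ i.castSucc := by
  rw [MonM, Finsupp.add_apply, Finsupp.single_eq_of_ne' (Fin.castSucc_lt_last i).ne',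
    zero_add, Um_apply_cs, rho_cs]

lemma MonM_apply_last (μ lam : Fin (p+1) →₀ ℕ) :
    MonM a N μ lam (Fin.last p) = E1 a N μ +
      Um a N (lam - Finsupp.erase (Fin.last p) μ) (Fin.last p) := by
  rw [MonM, Finsupp.add_apply, Finsupp.single_eq_same]

lemma Um_single_last_apply (t : ℕ) :
    Um a N (Finsupp.single (Fin.last p) t) (Fin.last p) = t * (N-2) := by
  rw [Um_single, umon_last, Finsupp.smul_single, smul_eq_mul, Finsupp.single_eq_same]

lemma erase_le_self (lam : Fin (p+1) →₀ ℕ) : Finsupp.erase (Fin.last p) lam ≤ lam :=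
  Finsupp.le_def.mpr fun v => by
    rw [Finsupp.erase_apply]
    split_ifs <;> omega

lemma homog_sum {d : ℕ} (f : PZ p) (hf : f.IsHomogeneous d) (μ : Fin (p+1) →₀ ℕ)
    (hμ : μ ∈ f.support) : ∑ v, μ v = d := by
  have h1 := hf (mem_support_iff.mp hμ)
  replace h1 : μ.degree = d := by rw [Finsupp.degree_eq_weight_one]; exact h1
  have h2 : μ.degree = ∑ v, μ v := Finset.sum_subset (Finset.subset_univ _)
    (fun v _ hv => Finsupp.notMem_support_iff.mp hv)
  omega

lemma CS0v (f : PZ p) (lam γ : Fin (p+1) →₀ ℕ)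
    (hx : ∀ i : Fin p, lam i.castSucc ≠ 0 → γ i.castSucc = 0)
    (hy : γ (Fin.last p) < E1 a N lam + lam (Fin.last p) * (N - 2)) :
    coeff γ (coeff lam (σσ a N f)) = 0 := by
  rw [coeff_coeff_sigma]
  refine Finset.sum_eq_zero fun μ _ => ?_
  rw [if_neg]
  rintro ⟨h1, h2⟩
  by_cases hν : ∀ i : Fin p, μ i.castSucc = lam i.castSucc
  · have hE : E1 a N μ = E1 a N lam := Finset.sum_congr rfl fun i _ => by rw [hν i]
    have h2l := Finsupp.le_def.mp h2 (Fin.last p)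
    rw [MonM_apply_last, rho_eq_single μ lam hν, Um_single_last_apply, hE] at h2l
    omega
  · push_neg at hν
    obtain ⟨i, hne⟩ := hν
    have hle := erase_le_of μ lam h1 i
    have h2i := Finsupp.le_def.mp h2 i.castSucc
    rw [MonM_apply_cs] at h2i
    have hγi : γ i.castSucc = 0 := hx i (by omega)
    omega

lemma CS0 {d : ℕ} (f : PZ p) (hf : f.IsHomogeneous d) (lam : Fin (p+1) →₀ ℕ)
    (hlam : ∑ v, lam v = d) :
    coeff (Finsupp.single (Fin.last p) (E1 a N lam + lam (Fin.last p) * (N-2)))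
        (coeff lam (σσ a N f)) =
      (-1)^(lam (Fin.last p)) * constantCoeff (coeff lam f) := by
  have hMon : MonM a N lam lam =
      Finsupp.single (Fin.last p) (E1 a N lam + lam (Fin.last p) * (N-2)) := by
    rw [MonM, rho_eq_single lam lam (fun i => rfl), Um_single, umon_last, Finsupp.smul_single,
      smul_eq_mul, ← Finsupp.single_add]
  have hSc : ScM a lam lam = (-1)^(lam (Fin.last p)) := by
    rw [ScM, rho_eq_single lam lam (fun i => rfl), mlt_single, Uc_single, ucoef_last,
      one_pow, mul_one, mul_one]
  have hterm : (if Finsupp.erase (Fin.last p) lam ≤ lam ∧ MonM a N lam lam ≤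
        Finsupp.single (Fin.last p) (E1 a N lam + lam (Fin.last p) * (N-2))
      then ScM a lam lam * coeff
        (Finsupp.single (Fin.last p) (E1 a N lam + lam (Fin.last p) * (N-2)) -
          MonM a N lam lam) (coeff lam f) else 0) =
      (-1)^(lam (Fin.last p)) * constantCoeff (coeff lam f) := by
    rw [if_pos ⟨erase_le_self lam, le_of_eq hMon⟩, hMon, tsub_self, hSc, constantCoeff_eq]
  rw [coeff_coeff_sigma, Finset.sum_eq_single lam ?junk ?notmem]
  · exact hterm
  case notmem =>
    intro h
    rw [hterm, notMem_support_iff.mp h, map_zero, mul_zero]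
  case junk =>
    intro μ hμ hne
    rw [if_neg]
    rintro ⟨h1, h2⟩
    by_cases hν : ∀ i : Fin p, μ i.castSucc = lam i.castSucc
    · apply hne
      have hdeg := homog_sum f hf μ hμ
      ext v
      induction v using Fin.lastCases with
      | cast i => exact hν i
      | last =>
        rw [Fin.sum_univ_castSucc] at hdeg hlam
        rw [Finset.sum_congr rfl (fun i _ => hν i)] at hdeg
        omega
    · push_neg at hν
      obtain ⟨i, hnei⟩ := hν
      have hle := erase_le_of μ lam h1 i
      have h2i := Finsupp.le_def.mp h2 i.castSucc
      rw [MonM_apply_cs, Finsupp.single_eq_of_ne' (Fin.castSucc_lt_last i).ne'] at h2i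
      omega

lemma Um_lamstar (k : Fin p) (t : ℕ) :
    Um a N (Finsupp.single k.castSucc 1 + Finsupp.single (Fin.last p) t) =
      Finsupp.single k.castSucc 1 +
        Finsupp.single (Fin.last p) ((ni a N k - 1) + t*(N-2)) := by
  rw [Um_add, Um_single, Um_single, one_smul, umon_cs, umon_last, Finsupp.smul_single,
    smul_eq_mul, add_assoc, ← Finsupp.single_add]

lemma junk_comp (k : Fin p) (t : ℕ) (μ : Fin (p+1) →₀ ℕ)
    (h1 : Finsupp.erase (Fin.last p) μ ≤
      Finsupp.single k.castSucc 1 + Finsupp.single (Fin.last p) t) :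
    (∀ i : Fin p, i ≠ k → μ i.castSucc = 0) ∧ μ k.castSucc ≤ 1 := by
  constructor
  · intro i hik
    have := Finsupp.le_def.mp h1 i.castSucc
    rw [Finsupp.erase_ne (Fin.castSucc_lt_last i).ne, Finsupp.add_apply,
      Finsupp.single_eq_of_ne' (fun h => hik (Fin.castSucc_inj.mp h).symm),
      Finsupp.single_eq_of_ne' (Fin.castSucc_lt_last i).ne'] at this
    omega
  · have := Finsupp.le_def.mp h1 k.castSucc
    rw [Finsupp.erase_ne (Fin.castSucc_lt_last k).ne, Finsupp.add_apply,
      Finsupp.single_eq_same,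
      Finsupp.single_eq_of_ne' (Fin.castSucc_lt_last k).ne'] at this
    omega

lemma erase_eq_zero_of (μ : Fin (p+1) →₀ ℕ) (h : ∀ i : Fin p, μ i.castSucc = 0) :
    Finsupp.erase (Fin.last p) μ = 0 := by
  ext v
  induction v using Fin.lastCases with
  | last => rw [Finsupp.erase_same]; rfl
  | cast i => rw [Finsupp.erase_ne (Fin.castSucc_lt_last i).ne, h i]; rfl

lemma mu_eq_single_of (μ : Fin (p+1) →₀ ℕ) (h : ∀ i : Fin p, μ i.castSucc = 0) :
    μ = Finsupp.single (Fin.last p) (μ (Fin.last p)) := by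
  have he := Finsupp.single_add_erase (Fin.last p) μ
  rw [erase_eq_zero_of μ h, add_zero] at he
  exact he.symm

lemma erase_eq_single_of (μ : Fin (p+1) →₀ ℕ) (k : Fin p) (hk : μ k.castSucc = 1)
    (h : ∀ i : Fin p, i ≠ k → μ i.castSucc = 0) :
    Finsupp.erase (Fin.last p) μ = Finsupp.single k.castSucc 1 := by
  ext v
  induction v using Fin.lastCases with
  | last =>
    rw [Finsupp.erase_same, Finsupp.single_eq_of_ne' (Fin.castSucc_lt_last k).ne]
  | cast i =>
    rw [Finsupp.erase_ne (Fin.castSucc_lt_last i).ne]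
    by_cases hik : i = k
    · subst hik; rw [hk, Finsupp.single_eq_same]
    · rw [h i hik, Finsupp.single_eq_of_ne' (fun hc => hik (Fin.castSucc_inj.mp hc).symm)]

lemma E1_eq_ni (k : Fin p) (μ : Fin (p+1) →₀ ℕ) (hk : μ k.castSucc = 1)
    (h : ∀ i : Fin p, i ≠ k → μ i.castSucc = 0) : E1 a N μ = ni a N k := by
  rw [E1, Finset.sum_eq_single k]
  · rw [hk, mul_one]
  · intro i _ hik; rw [h i hik, mul_zero]
  · intro h'; exact absurd (Finset.mem_univ k) h'

lemma E1_eq_zero (μ : Fin (p+1) →₀ ℕ) (h : ∀ i : Fin p, μ i.castSucc = 0) :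
    E1 a N μ = 0 :=
  Finset.sum_eq_zero fun i _ => by rw [h i, mul_zero]

lemma CS2 {d : ℕ} (f : PZ p) (k : Fin p) (γ : Fin (p+1) →₀ ℕ)
    (hy : γ (Fin.last p) < (ni a N k - 1) + (d-1)*(N-2)) :
    coeff γ (coeff (Finsupp.single k.castSucc 1 + Finsupp.single (Fin.last p) (d-1))
      (σσ a N f)) = 0 := by
  rw [coeff_coeff_sigma]
  refine Finset.sum_eq_zero fun μ _ => ?_
  rw [if_neg]
  rintro ⟨h1, h2⟩
  obtain ⟨hall, hk1⟩ := junk_comp k (d-1) μ h1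
  have h2l := Finsupp.le_def.mp h2 (Fin.last p)
  rw [MonM_apply_last] at h2l
  by_cases hk : μ k.castSucc = 0
  · have hz : ∀ i : Fin p, μ i.castSucc = 0 := by
      intro i; by_cases hik : i = k
      · subst hik; exact hk
      · exact hall i hik
    rw [erase_eq_zero_of μ hz, tsub_zero, Um_lamstar] at h2l
    rw [Finsupp.add_apply, Finsupp.single_eq_of_ne' (Fin.castSucc_lt_last k).ne,
      Finsupp.single_eq_same] at h2l
    omega
  · have hk1' : μ k.castSucc = 1 := by omega
    rw [erase_eq_single_of μ k hk1' hall, add_tsub_cancel_left, Um_single_last_apply,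
      E1_eq_ni a N k μ hk1' hall] at h2l
    omega

lemma CS1 (hNa : ∀ i, a i + 1 ≤ (N:ℤ)) {d : ℕ} (f : PZ p) (hf : f.IsHomogeneous d)
    (hd : 1 ≤ d) (k : Fin p) :
    coeff (Finsupp.single k.castSucc 1 +
        Finsupp.single (Fin.last p) ((ni a N k - 1) + (d-1) * (N-2)))
      (coeff (Finsupp.single k.castSucc 1 + Finsupp.single (Fin.last p) (d-1))
        (σσ a N f)) =
      (-1)^d * d * (a k : ℂ) * constantCoeff (coeff (Finsupp.single (Fin.last p) d) f) := by
  have hklast : k.castSucc ≠ Fin.last p := (Fin.castSucc_lt_last k).ne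
  have herase_mus : Finsupp.erase (Fin.last p) (Finsupp.single (Fin.last p) d) = 0 :=
    Finsupp.erase_single
  have hMon : MonM a N (Finsupp.single (Fin.last p) d)
      (Finsupp.single k.castSucc 1 + Finsupp.single (Fin.last p) (d-1)) =
      Finsupp.single k.castSucc 1 +
        Finsupp.single (Fin.last p) ((ni a N k - 1) + (d-1) * (N-2)) := by
    rw [MonM, herase_mus, tsub_zero, Um_lamstar,
      E1_eq_zero a N _ (fun i => by
        rw [Finsupp.single_eq_of_ne' (Fin.castSucc_lt_last i).ne']),
      Finsupp.single_zero, zero_add]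
  have hSc : ScM a (Finsupp.single (Fin.last p) d)
      (Finsupp.single k.castSucc 1 + Finsupp.single (Fin.last p) (d-1)) =
      (-1)^d * d * (a k : ℂ) := by
    rw [ScM, herase_mus, tsub_zero, Finsupp.single_eq_same]
    have hd1 : d - 1 + 1 = d := by omega
    have hmlt : mlt (Finsupp.single k.castSucc 1 + Finsupp.single (Fin.last p) (d-1)) d =
        (d : ℂ) := by
      have := mlt_two k.castSucc (Fin.last p) hklast (d-1)
      rw [hd1] at this
      rw [this]
      push_cast [hd1]
      norm_cast
    rw [hmlt, Uc_add, Uc_single, Uc_single, ucoef_cs, ucoef_last, one_pow, mul_one, pow_one]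
  have hterm : (if Finsupp.erase (Fin.last p) (Finsupp.single (Fin.last p) d) ≤
        (Finsupp.single k.castSucc 1 + Finsupp.single (Fin.last p) (d-1)) ∧
        MonM a N (Finsupp.single (Fin.last p) d)
          (Finsupp.single k.castSucc 1 + Finsupp.single (Fin.last p) (d-1)) ≤
        (Finsupp.single k.castSucc 1 +
          Finsupp.single (Fin.last p) ((ni a N k - 1) + (d-1) * (N-2)))
      then ScM a (Finsupp.single (Fin.last p) d)
          (Finsupp.single k.castSucc 1 + Finsupp.single (Fin.last p) (d-1)) *
        coeff ((Finsupp.single k.castSucc 1 +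
          Finsupp.single (Fin.last p) ((ni a N k - 1) + (d-1) * (N-2))) -
          MonM a N (Finsupp.single (Fin.last p) d)
            (Finsupp.single k.castSucc 1 + Finsupp.single (Fin.last p) (d-1)))
          (coeff (Finsupp.single (Fin.last p) d) f) else 0) =
      (-1)^d * d * (a k : ℂ) * constantCoeff (coeff (Finsupp.single (Fin.last p) d) f) := by
    rw [if_pos ⟨herase_mus ▸ zero_le, le_of_eq hMon⟩, hMon, tsub_self, hSc, constantCoeff_eq]
  rw [coeff_coeff_sigma, Finset.sum_eq_single (Finsupp.single (Fin.last p) d) ?junk ?notmem]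
  · exact hterm
  case notmem =>
    intro h
    rw [hterm, notMem_support_iff.mp h, map_zero, mul_zero]
  case junk =>
    intro μ hμ hne
    rw [if_neg]
    rintro ⟨h1, h2⟩
    obtain ⟨hall, hk1⟩ := junk_comp k (d-1) μ h1
    by_cases hk : μ k.castSucc = 0
    · apply hne
      have hz : ∀ i : Fin p, μ i.castSucc = 0 := by
        intro i; by_cases hik : i = k
        · subst hik; exact hk
        · exact hall i hik
      have hdeg := homog_sum f hf μ hμ
      rw [Fin.sum_univ_castSucc, Finset.sum_congr rfl (fun i _ => hz i),
        Finset.sum_const_zero, zero_add] at hdeg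
      rw [mu_eq_single_of μ hz, hdeg]
    · have hk1' : μ k.castSucc = 1 := by omega
      have h2l := Finsupp.le_def.mp h2 (Fin.last p)
      rw [MonM_apply_last, erase_eq_single_of μ k hk1' hall, add_tsub_cancel_left,
        Um_single_last_apply, E1_eq_ni a N k μ hk1' hall, Finsupp.add_apply,
        Finsupp.single_eq_of_ne' hklast, Finsupp.single_eq_same, zero_add] at h2l
      have := ni_pos a N hNa k
      omega


lemma pair_cs (k i : Fin p) (x y : ℕ) :
    (Finsupp.single k.castSucc x + Finsupp.single (Fin.last p) y) i.castSucc =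
      if k = i then x else 0 := by
  rw [Finsupp.add_apply, Finsupp.single_eq_of_ne' (Fin.castSucc_lt_last i).ne', add_zero,
    Finsupp.single_apply]
  exact if_congr Fin.castSucc_inj rfl rfl

lemma pair_last (k : Fin p) (x y : ℕ) :
    (Finsupp.single k.castSucc x + Finsupp.single (Fin.last p) y) (Fin.last p) = y := by
  rw [Finsupp.add_apply, Finsupp.single_eq_of_ne' (Fin.castSucc_lt_last k).ne,
    Finsupp.single_eq_same, zero_add]

lemma fs_subA (β : Fin (p+1) →₀ ℕ) (s t : ℕ) (h : t ≤ s) :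
    β + Finsupp.single (Fin.last p) s - Finsupp.single (Fin.last p) t =
      β + Finsupp.single (Fin.last p) (s - t) := by
  ext v
  rw [Finsupp.tsub_apply, Finsupp.add_apply, Finsupp.add_apply]
  rcases eq_or_ne v (Fin.last p) with rfl | hv
  · rw [Finsupp.single_eq_same, Finsupp.single_eq_same, Finsupp.single_eq_same]
    omega
  · rw [Finsupp.single_eq_of_ne' (Ne.symm hv), Finsupp.single_eq_of_ne' (Ne.symm hv),
      Finsupp.single_eq_of_ne' (Ne.symm hv)]
    omega

lemma fs_subB (k : Fin p) (s t u : ℕ) (h : t ≤ s) :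
    Finsupp.single k.castSucc s + Finsupp.single (Fin.last p) u -
        Finsupp.single k.castSucc t =
      Finsupp.single k.castSucc (s - t) + Finsupp.single (Fin.last p) u := by
  ext v
  rw [Finsupp.tsub_apply, Finsupp.add_apply, Finsupp.add_apply]
  rcases eq_or_ne v k.castSucc with rfl | hv
  · rw [Finsupp.single_eq_same, Finsupp.single_eq_same, Finsupp.single_eq_same,
      Finsupp.single_eq_of_ne' (Fin.castSucc_lt_last k).ne']
    omega
  · rw [Finsupp.single_eq_of_ne' (Ne.symm hv), Finsupp.single_eq_of_ne' (Ne.symm hv),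
      Finsupp.single_eq_of_ne' (Ne.symm hv)]
    omega

lemma coeff_coeff_Hp (d : ℕ) (F : Fin (p+1) → PZ p) (lam' γ : Fin (p+1) →₀ ℕ) :
    coeff γ (coeff lam' (Hp a N d F)) =
      (if Finsupp.single (Fin.last p) d ≤ γ then
        coeff (γ - Finsupp.single (Fin.last p) d) (coeff lam' (σσ a N (F (Fin.last p))))
      else 0) +
      ∑ i : Fin p, (if Finsupp.single i.castSucc d ≤ γ then
        (a i : ℂ) * coeff (γ - Finsupp.single i.castSucc d)
          (coeff lam' (σσ a N (F i.castSucc)))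
      else 0) := by
  have hsplit : coeff lam' (Hp a N d F) =
      monomial (Finsupp.single (Fin.last p) d) (1:ℂ) * coeff lam' (σσ a N (F (Fin.last p))) +
      ∑ i : Fin p, monomial (Finsupp.single i.castSucc d) ((a i : ℂ)) *
        coeff lam' (σσ a N (F i.castSucc)) := by
    rw [Hp, coeff_add, coeff_C_mul, coeff_sum, MvPolynomial.X_pow_eq_monomial]
    congr 1
    exact Finset.sum_congr rfl fun i _ => by rw [coeff_C_mul]
  rw [hsplit, coeff_add, coeff_sum]
  congr 1
  · rw [coeff_monomial_mul']
    split_ifs with h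
    · rw [one_mul]
    · rfl
  · exact Finset.sum_congr rfl fun i _ => by rw [coeff_monomial_mul']

end TanAux

open TanAux in
/-- Main claim, tangent bundle case. Assume `a_1 ≤ ⋯ ≤ a_m ≤ 0 < a_{m+1} ≤ ⋯ ≤ a_{n-1}`
with `0 ≤ m < n` and `a_k ≠ 0` for some `k`. Let `d ≥ 2`, let `f_1,…,f_n` have coefficients
in `R = ℂ[x_1,…,x_{n-1},y]` and `g_1,…,g_n` have coefficients in `A`, all homogeneous of
degree `d` in `z_1,…,z_n`, satisfying the compatibility conditions `(C_j)` and `(C_n)` in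
`K[z_1,…,z_n]`. Then for every `m+1 ≤ j ≤ n` and every composition `λ` of `d` with
`λ_i = 0` for `m+1 ≤ i ≤ n-1`, the coefficient `[z^λ](f_j) ∈ R` has zero constant term.
(Here the paper's `n` is `p+1`; indices `1,…,n` correspond to `Fin (p+1)`.) -/
theorem tangent_coefficients_vanish (p d m : ℕ) (hp : 1 ≤ p) (hd : 2 ≤ d) (hm : m < p + 1)
    (a : Fin p → ℤ) (hsort : Monotone a)
    (hnonpos : ∀ i : Fin p, (i : ℕ) < m → a i ≤ 0)
    (hpos : ∀ i : Fin p, m ≤ (i : ℕ) → 0 < a i)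
    (hne : ∃ k : Fin p, a k ≠ 0)
    (F : Fin (p+1) → MvPolynomial (Fin (p+1)) (MvPolynomial (Fin (p+1)) ℂ))
    (g : Fin (p+1) → MvPolynomial (Fin (p+1)) (Kk p))
    (hFhom : ∀ j, (F j).IsHomogeneous d)
    (hghom : ∀ j, (g j).IsHomogeneous d)
    (hgA : ∀ j c, coeff c (g j) ∈ Asub a)
    (hCj : ∀ j : Fin p,
      g j.castSucc = C (yv ^ ((d : ℤ) * a j)) * symJ a (toK (F j.castSucc)))
    (hCn : g (Fin.last p) =
      -(C (yv ^ (2 * d)) * symJ a (toK (F (Fin.last p)))) -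
        ∑ i : Fin p, C ((a i : Kk p) * xv i ^ d * yv ^ d) * symJ a (toK (F i.castSucc))) :
    ∀ j : Fin (p+1), m ≤ (j : ℕ) →
      ∀ lam : Fin (p+1) → ℕ, (∑ i, lam i = d) →
        (∀ i : Fin p, m ≤ (i : ℕ) → lam i.castSucc = 0) →
        constantCoeff (coeff (Finsupp.equivFunOnFinite.symm lam) (F j)) = 0 := by
  classical
  intro j hj lam hlsum hlzero
  set N : ℕ := 2 + Finset.univ.sup (fun i => (a i).toNat) with hNdef
  have hNa : ∀ i, a i + 1 ≤ (N:ℤ) := by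
    intro i
    have h1 := Int.self_le_toNat (a i)
    have h2 : (a i).toNat ≤ Finset.univ.sup (fun i => (a i).toNat) :=
      Finset.le_sup (f := fun i => (a i).toNat) (Finset.mem_univ i)
    omega
  have hN2 : 2 ≤ N := by omega
  have hkey := TanAux.map_Hp a N hNa hN2 F (g (Fin.last p)) hFhom hCn
  have KLa := TanAux.KL a N F (g (Fin.last p)) hkey (fun c => hgA _ c)
  set l0 : Fin (p+1) →₀ ℕ := Finsupp.equivFunOnFinite.symm lam with hl0def
  have hlap : ∀ v, l0 v = lam v := fun v => rfl
  have hsum : ∑ v, l0 v = d := by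
    rw [Finset.sum_congr rfl fun v _ => hlap v]; exact hlsum
  have hz : ∀ i : Fin p, m ≤ (i:ℕ) → l0 i.castSucc = 0 := fun i him => by
    rw [hlap]; exact hlzero i him
  have hNdZ : (((N-1)*d : ℕ) : ℤ) = ((N:ℤ)-1)*(d:ℤ) := by
    rw [Nat.cast_mul, Nat.cast_sub (show 1 ≤ N by omega)]
    norm_num
  have hlast_le : l0 (Fin.last p) ≤ d := by
    calc l0 (Fin.last p) ≤ ∑ i : Fin p, l0 i.castSucc + l0 (Fin.last p) :=
          Nat.le_add_left _ _
    _ = ∑ v, l0 v := (Fin.sum_univ_castSucc (fun v => l0 v)).symm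
    _ = d := hsum
  show constantCoeff (coeff l0 (F j)) = 0
  by_cases hln : l0 (Fin.last p) = d
  · -- exceptional case λ = d·e_n
    have hzz : ∀ i : Fin p, l0 i.castSucc = 0 := by
      intro i
      have h := hsum
      rw [Fin.sum_univ_castSucc, hln] at h
      have h0 : ∑ i : Fin p, l0 i.castSucc = 0 := by omega
      exact (Finset.sum_eq_zero_iff).mp h0 i (Finset.mem_univ i)
    have hl00 : l0 = Finsupp.single (Fin.last p) d :=
      (TanAux.mu_eq_single_of l0 hzz).trans (by rw [hln])
    rw [hl00]
    rcases Fin.eq_castSucc_or_eq_last j with ⟨j', rfl⟩ | rfl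
    · -- E3b : j = castSucc j'
      have hj' : m ≤ (j' : ℕ) := by simpa using hj
      have haj' : 0 < a j' := hpos j' hj'
      have hni := TanAux.ni_pos a N hNa j'
      have hnic := TanAux.ni_cast a N hNa j'
      have hTc : ((TanAux.ni a N j' - 1 + (d-1)*(N-2) : ℕ) : ℤ) =
          ((N:ℤ) - a j' - 1) + ((d:ℤ)-1)*((N:ℤ)-2) := by
        rw [Nat.cast_add, Nat.cast_sub hni, hnic, Nat.cast_mul,
          Nat.cast_sub (show 1 ≤ d by omega), Nat.cast_sub (show 2 ≤ N by omega)]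
        push_cast
        ring
      have hw : (((N-1)*d : ℕ) : ℤ) < TanAux.wA a (Finsupp.single j'.castSucc (d+1) +
          Finsupp.single (Fin.last p) (TanAux.ni a N j' - 1 + (d-1)*(N-2))) := by
        rw [TanAux.wA_add, TanAux.wA_single_cs, TanAux.wA_single_last, hNdZ, hTc]
        have hda : (d:ℤ) * 1 ≤ (d:ℤ) * (a j') :=
          mul_le_mul_of_nonneg_left (by omega) (by positivity)
        have hident : a j' * ((d+1 : ℕ):ℤ) + (((N:ℤ) - a j' - 1) + ((d:ℤ)-1)*((N:ℤ)-2)) =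
            ((N:ℤ)-1)*(d:ℤ) + 1 + ((d:ℤ) * (a j') - d) := by
          push_cast
          ring
        rw [hident]
        linarith
      have hKL := KLa (Finsupp.single j'.castSucc 1 + Finsupp.single (Fin.last p) (d-1))
        (Finsupp.single j'.castSucc (d+1) +
          Finsupp.single (Fin.last p) (TanAux.ni a N j' - 1 + (d-1)*(N-2))) hw
      rw [TanAux.coeff_coeff_Hp] at hKL
      -- first term vanishes
      have hterm1 : (if Finsupp.single (Fin.last p) d ≤ Finsupp.single j'.castSucc (d+1) +
            Finsupp.single (Fin.last p) (TanAux.ni a N j' - 1 + (d-1)*(N-2)) then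
          coeff ((Finsupp.single j'.castSucc (d+1) +
            Finsupp.single (Fin.last p) (TanAux.ni a N j' - 1 + (d-1)*(N-2))) -
            Finsupp.single (Fin.last p) d)
            (coeff (Finsupp.single j'.castSucc 1 + Finsupp.single (Fin.last p) (d-1))
              (σσ a N (F (Fin.last p)))) else 0) = 0 := by
        by_cases hdT : d ≤ TanAux.ni a N j' - 1 + (d-1)*(N-2)
        · rw [if_pos (Finsupp.single_le_iff.mpr (by rw [TanAux.pair_last]; omega)),
            TanAux.fs_subA _ _ _ hdT]
          exact TanAux.CS2 a N (F (Fin.last p)) j' _ (by rw [TanAux.pair_last]; omega)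
        · rw [if_neg]
          intro hcon
          have h5 := Finsupp.single_le_iff.mp hcon
          rw [TanAux.pair_last] at h5
          exact hdT h5
      rw [hterm1, zero_add] at hKL
      -- the sum collapses to i = j'
      rw [Finset.sum_eq_single j' (fun i _ hi => by
          rw [if_neg]
          intro hcon
          have := Finsupp.single_le_iff.mp hcon
          rw [TanAux.pair_cs] at this
          rw [if_neg (fun h => hi h.symm)] at this
          omega)
        (fun h => absurd (Finset.mem_univ j') h)] at hKL
      rw [if_pos (Finsupp.single_le_iff.mpr (by rw [TanAux.pair_cs, if_pos rfl]; omega)),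
        TanAux.fs_subB j' (d+1) d _ (by omega), show d + 1 - d = 1 by omega] at hKL
      rw [TanAux.CS1 a N hNa (F j'.castSucc) (hFhom _) (by omega) j'] at hKL
      rcases mul_eq_zero.mp hKL with h | h
      · exact absurd h (Int.cast_ne_zero.mpr (by omega))
      · rcases mul_eq_zero.mp h with h2 | h2
        · rcases mul_eq_zero.mp h2 with h3 | h3
          · rcases mul_eq_zero.mp h3 with h4 | h4
            · exact absurd h4 (pow_ne_zero _ (by norm_num))
            · exact absurd h4 (Nat.cast_ne_zero.mpr (by omega))
          · exact absurd h3 (Int.cast_ne_zero.mpr (by omega))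
        · exact h2
    · -- E3a : j = last
      obtain ⟨k, hk⟩ := hne
      have hni := TanAux.ni_pos a N hNa k
      have hnic := TanAux.ni_cast a N hNa k
      have hTc : ((TanAux.ni a N k - 1 + (d-1)*(N-2) : ℕ) : ℤ) =
          ((N:ℤ) - a k - 1) + ((d:ℤ)-1)*((N:ℤ)-2) := by
        rw [Nat.cast_add, Nat.cast_sub hni, hnic, Nat.cast_mul,
          Nat.cast_sub (show 1 ≤ d by omega), Nat.cast_sub (show 2 ≤ N by omega)]
        push_cast
        ring
      have hw : (((N-1)*d : ℕ) : ℤ) < TanAux.wA a (Finsupp.single k.castSucc 1 +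
          Finsupp.single (Fin.last p) ((TanAux.ni a N k - 1 + (d-1)*(N-2)) + d)) := by
        rw [TanAux.wA_add, TanAux.wA_single_cs, TanAux.wA_single_last, hNdZ,
          Nat.cast_add (TanAux.ni a N k - 1 + (d-1)*(N-2)) d, hTc]
        have hident : a k * ((1 : ℕ):ℤ) +
            ((((N:ℤ) - a k - 1) + ((d:ℤ)-1)*((N:ℤ)-2)) + (d:ℤ)) =
            ((N:ℤ)-1)*(d:ℤ) + 1 := by
          push_cast
          ring
        rw [hident]
        exact lt_add_one _
      have hKL := KLa (Finsupp.single k.castSucc 1 + Finsupp.single (Fin.last p) (d-1))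
        (Finsupp.single k.castSucc 1 +
          Finsupp.single (Fin.last p) ((TanAux.ni a N k - 1 + (d-1)*(N-2)) + d)) hw
      rw [TanAux.coeff_coeff_Hp] at hKL
      rw [Finset.sum_eq_zero (fun i _ => by
          rw [if_neg]
          intro hcon
          have := Finsupp.single_le_iff.mp hcon
          rw [TanAux.pair_cs] at this
          split_ifs at this <;> omega), add_zero] at hKL
      rw [if_pos (Finsupp.single_le_iff.mpr (by rw [TanAux.pair_last]; omega)),
        TanAux.fs_subA _ _ _ (by omega : d ≤ (TanAux.ni a N k - 1 + (d-1)*(N-2)) + d),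
        Nat.add_sub_cancel] at hKL
      rw [TanAux.CS1 a N hNa (F (Fin.last p)) (hFhom _) (by omega) k] at hKL
      rcases mul_eq_zero.mp hKL with h | h
      · rcases mul_eq_zero.mp h with h2 | h2
        · rcases mul_eq_zero.mp h2 with h3 | h3
          · exact absurd h3 (pow_ne_zero _ (by norm_num))
          · exact absurd h3 (Nat.cast_ne_zero.mpr (by omega))
        · exact absurd h2 (Int.cast_ne_zero.mpr hk)
      · exact h
  · -- main case λ_n < d
    have hlt : l0 (Fin.last p) < d := lt_of_le_of_ne hlast_le hln
    have hE1cast : ((TanAux.E1 a N l0 : ℕ) : ℤ) =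
        (N:ℤ) * (∑ i : Fin p, (l0 i.castSucc : ℤ)) -
          ∑ i : Fin p, a i * (l0 i.castSucc : ℤ) := by
      rw [TanAux.E1, Nat.cast_sum, Finset.mul_sum, ← Finset.sum_sub_distrib]
      refine Finset.sum_congr rfl fun i _ => ?_
      rw [Nat.cast_mul, TanAux.ni_cast a N hNa i]
      ring
    have hSl : (∑ i : Fin p, (l0 i.castSucc : ℤ)) + (l0 (Fin.last p) : ℤ) = (d:ℤ) := by
      have h := hsum
      rw [Fin.sum_univ_castSucc] at h
      exact_mod_cast congrArg (fun n : ℕ => (n:ℤ)) h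
    have hSxa : (∑ i : Fin p, a i * (l0 i.castSucc : ℤ)) ≤ 0 := by
      refine Finset.sum_nonpos fun i _ => ?_
      rcases le_or_gt m (i : ℕ) with him | him
      · rw [hz i him]
        simp
      · exact mul_nonpos_iff.mpr (Or.inr ⟨hnonpos i him, Int.natCast_nonneg _⟩)
    have hEEc : ((TanAux.E1 a N l0 + l0 (Fin.last p) * (N-2) : ℕ) : ℤ) =
        (N:ℤ)*(d:ℤ) - (∑ i : Fin p, a i * (l0 i.castSucc : ℤ)) -
          2*(l0 (Fin.last p):ℤ) := by
      rw [Nat.cast_add (TanAux.E1 a N l0) (l0 (Fin.last p) * (N-2)), hE1cast,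
        Nat.cast_mul (l0 (Fin.last p)) (N-2), Nat.cast_sub (show 2 ≤ N by omega)]
      push_cast
      linear_combination (N:ℤ) * hSl
    have hlnZ : (l0 (Fin.last p) : ℤ) < (d:ℤ) := by exact_mod_cast hlt
    rcases Fin.eq_castSucc_or_eq_last j with ⟨j', rfl⟩ | rfl
    · -- E1 : j = castSucc j'
      have hj' : m ≤ (j' : ℕ) := by simpa using hj
      have haj' : 0 < a j' := hpos j' hj'
      have hw : (((N-1)*d : ℕ) : ℤ) < TanAux.wA a (Finsupp.single j'.castSucc d +
          Finsupp.single (Fin.last p) (TanAux.E1 a N l0 + l0 (Fin.last p) * (N-2))) := by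
        rw [TanAux.wA_add, TanAux.wA_single_cs, TanAux.wA_single_last, hNdZ, hEEc]
        have hda : (d:ℤ) * 1 ≤ (d:ℤ) * (a j') :=
          mul_le_mul_of_nonneg_left (by omega) (by positivity)
        have hident : a j' * ((d : ℕ):ℤ) +
            ((N:ℤ)*(d:ℤ) - (∑ i : Fin p, a i * (l0 i.castSucc : ℤ)) -
              2*(l0 (Fin.last p):ℤ)) =
            ((N:ℤ)-1)*(d:ℤ) + ((d:ℤ) * (a j')) + (d:ℤ) -
              (∑ i : Fin p, a i * (l0 i.castSucc : ℤ)) - 2*(l0 (Fin.last p):ℤ) := by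
          push_cast
          ring
        rw [hident]
        linarith
      have hKL := KLa l0 (Finsupp.single j'.castSucc d +
        Finsupp.single (Fin.last p) (TanAux.E1 a N l0 + l0 (Fin.last p) * (N-2))) hw
      rw [TanAux.coeff_coeff_Hp] at hKL
      have hterm1 : (if Finsupp.single (Fin.last p) d ≤ Finsupp.single j'.castSucc d +
            Finsupp.single (Fin.last p) (TanAux.E1 a N l0 + l0 (Fin.last p) * (N-2)) then
          coeff ((Finsupp.single j'.castSucc d +
            Finsupp.single (Fin.last p) (TanAux.E1 a N l0 + l0 (Fin.last p) * (N-2))) -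
            Finsupp.single (Fin.last p) d) (coeff l0 (σσ a N (F (Fin.last p)))) else 0)
          = 0 := by
        by_cases hdE : d ≤ TanAux.E1 a N l0 + l0 (Fin.last p) * (N-2)
        · rw [if_pos (Finsupp.single_le_iff.mpr (by rw [TanAux.pair_last]; omega)),
            TanAux.fs_subA _ _ _ hdE]
          refine TanAux.CS0v a N (F (Fin.last p)) l0 _ ?_ ?_
          · intro i hi
            have him : (i : ℕ) < m := by
              by_contra hcon
              exact hi (hz i (by omega))
            rw [TanAux.pair_cs, if_neg (fun h => by
              have : (j' : ℕ) = (i : ℕ) := by rw [h]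
              omega)]
          · rw [TanAux.pair_last]
            omega
        · rw [if_neg]
          intro hcon
          have h5 := Finsupp.single_le_iff.mp hcon
          rw [TanAux.pair_last] at h5
          exact hdE h5
      rw [hterm1, zero_add] at hKL
      rw [Finset.sum_eq_single j' (fun i _ hi => by
          rw [if_neg]
          intro hcon
          have := Finsupp.single_le_iff.mp hcon
          rw [TanAux.pair_cs] at this
          rw [if_neg (fun h => hi h.symm)] at this
          omega)
        (fun h => absurd (Finset.mem_univ j') h)] at hKL
      rw [if_pos (le_self_add), add_tsub_cancel_left] at hKL
      rw [TanAux.CS0 a N (F j'.castSucc) (hFhom _) l0 hsum] at hKL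
      rcases mul_eq_zero.mp hKL with h | h
      · exact absurd h (Int.cast_ne_zero.mpr (by omega))
      · rcases mul_eq_zero.mp h with h2 | h2
        · exact absurd h2 (pow_ne_zero _ (by norm_num))
        · exact h2
    · -- E2 : j = last
      have hw : (((N-1)*d : ℕ) : ℤ) < TanAux.wA a (Finsupp.single (Fin.last p)
          ((TanAux.E1 a N l0 + l0 (Fin.last p) * (N-2)) + d)) := by
        rw [TanAux.wA_single_last, hNdZ,
          Nat.cast_add (TanAux.E1 a N l0 + l0 (Fin.last p) * (N-2)) d, hEEc]
        linarith
      have hKL := KLa l0 (Finsupp.single (Fin.last p)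
        ((TanAux.E1 a N l0 + l0 (Fin.last p) * (N-2)) + d)) hw
      rw [TanAux.coeff_coeff_Hp] at hKL
      rw [Finset.sum_eq_zero (fun i _ => by
          rw [if_neg]
          intro hcon
          have := Finsupp.single_le_iff.mp hcon
          rw [Finsupp.single_eq_of_ne' (Fin.castSucc_lt_last i).ne'] at this
          omega), add_zero] at hKL
      rw [if_pos (Finsupp.single_le_iff.mpr (by rw [Finsupp.single_eq_same]; omega)),
        TanAux.fs_single_sub] at hKL
      rw [TanAux.CS0 a N (F (Fin.last p)) (hFhom _) l0 hsum] at hKL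
      rcases mul_eq_zero.mp hKL with h | h
      · exact absurd h (pow_ne_zero _ (by norm_num))
      · exact h

end
end
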